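/- arXiv:1411.4190 — 4 statements merged into one kernel-verified Lean document; each statement's English description precedes it below -/
import Mathlib

section
/- Let G be a group such that (i) every injective group endomorphism of G is surjective (G is co-hopfian), (ii) the automorphism group of G is abelian, and (iii) every endomorphism φ of G that is not an automorphism has image contained in the center Z(G) and inverts only the identity, i.e. φ(x) = x⁻¹ implies x = 1. Then the endomorphism monoid End(G) is commutative, i.e. φ ∘ ψ = ψ ∘ φ for all endomorphisms φ, ψ of G. -/
theorem stmt_0 (G : Type*) [Group G]
    (hco : ∀ φ : G →* G, Function.Injective φ → Function.Surjective φ)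
    (haut : ∀ α β : MulAut G, α * β = β * α)
    (hend : ∀ φ : G →* G, ¬ Function.Bijective φ →
      (∀ x : G, φ x ∈ Subgroup.center G) ∧ (∀ x : G, φ x = x⁻¹ → x = 1)) :
    ∀ φ ψ : G →* G, φ.comp ψ = ψ.comp φ := by
  -- For non-bijective φ, the map x ↦ φ x * x is an automorphism.
  have build : ∀ φ : G →* G, ¬ Function.Bijective φ →
      ∃ e : MulAut G, ∀ x, e x = φ x * x := by
    intro φ hφ
    obtain ⟨hc, hi⟩ := hend φ hφ
    have hcomm : ∀ x y : G, y * φ x = φ x * y := fun x y =>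
      (Subgroup.mem_center_iff.mp (hc x)) y
    let g : G →* G :=
      { toFun := fun x => φ x * x
        map_one' := by simp
        map_mul' := by
          intro x y
          simp only [map_mul, mul_assoc]
          rw [← mul_assoc x, hcomm y x, mul_assoc] }
    have hg : ∀ x, g x = φ x * x := fun x => rfl
    have hinj : Function.Injective g := by
      rw [injective_iff_map_eq_one]
      intro a ha
      rw [hg] at ha
      exact hi a (eq_inv_of_mul_eq_one_left ha)
    exact ⟨MulEquiv.ofBijective g ⟨hinj, hco g hinj⟩, hg⟩
  have key : ∀ φ ψ : G →* G, ¬ Function.Bijective φ → φ.comp ψ = ψ.comp φ := by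
    intro φ ψ hφ
    obtain ⟨e, he⟩ := build φ hφ
    obtain ⟨hc, _⟩ := hend φ hφ
    have hcomm : ∀ x y : G, y * φ x = φ x * y := fun x y =>
      (Subgroup.mem_center_iff.mp (hc x)) y
    by_cases hψ : Function.Bijective ψ
    · -- ψ is an automorphism; it commutes with e
      set β : MulAut G := MulEquiv.ofBijective ψ hψ with hβ
      have hβx : ∀ x, β x = ψ x := fun x => rfl
      have h := haut e β
      ext x
      have h1 : (e * β) x = (β * e) x := by rw [h]
      rw [MulAut.mul_apply, MulAut.mul_apply, hβx, he, hβx, he, map_mul] at h1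
      exact mul_right_cancel h1
    · obtain ⟨f, hf⟩ := build ψ hψ
      obtain ⟨hcψ, _⟩ := hend ψ hψ
      have hcommψ : ∀ x y : G, y * ψ x = ψ x * y := fun x y =>
        (Subgroup.mem_center_iff.mp (hcψ x)) y
      have h := haut e f
      ext x
      have h1 : (e * f) x = (f * e) x := by rw [h]
      rw [MulAut.mul_apply, MulAut.mul_apply, he, hf, hf, he, map_mul, map_mul] at h1
      simp only [← mul_assoc] at h1
      have h2 := mul_right_cancel h1
      -- h2 : φ (ψ x) * φ x * ψ x = ψ (φ x) * ψ x * φ x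
      rw [mul_assoc (ψ (φ x)), ← hcommψ x (φ x), ← mul_assoc] at h2
      have h3 := mul_right_cancel h2
      exact mul_right_cancel h3
  intro φ ψ
  by_cases hφ : Function.Bijective φ
  · by_cases hψ : Function.Bijective ψ
    · set α : MulAut G := MulEquiv.ofBijective φ hφ
      set β : MulAut G := MulEquiv.ofBijective ψ hψ
      have h := haut α β
      ext x
      have h1 : (α * β) x = (β * α) x := by rw [h]
      rwa [MulAut.mul_apply, MulAut.mul_apply] at h1
    · exact (key ψ φ hψ).symm
  · exact key φ ψ hφ
end

section
/- Let G be a co-hopfian group (every injective group endomorphism of G is surjective). Then Aut(G) is abelian if and only if both of the following hold: (a) every automorphism α of G is central, i.e. α(x)·x⁻¹ ∈ Z(G) for all x ∈ G; and (b) any two endomorphisms f, g of G whose images are contained in Z(G) and which invert only the identity (f(x) = x⁻¹ implies x = 1, and likewise for g) commute under composition: f ∘ g = g ∘ f. -/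
theorem stmt_1 (G : Type*) [Group G]
    (hco : ∀ φ : G →* G, Function.Injective φ → Function.Surjective φ) :
    (∀ α β : MulAut G, α * β = β * α) ↔
      ((∀ (α : MulAut G) (x : G), α x * x⁻¹ ∈ Subgroup.center G) ∧
       (∀ f g : G →* G,
          (∀ x : G, f x ∈ Subgroup.center G) → (∀ x : G, f x = x⁻¹ → x = 1) →
          (∀ x : G, g x ∈ Subgroup.center G) → (∀ x : G, g x = x⁻¹ → x = 1) →
          f.comp g = g.comp f)) := by
  constructor
  · intro h
    constructor
    · -- every automorphism is central
      intro α x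
      have hc : x⁻¹ * α x ∈ Subgroup.center G := by
        rw [Subgroup.mem_center_iff]
        intro z
        obtain ⟨y, rfl⟩ := α.surjective z
        have key : α x * α y * (α x)⁻¹ = x * α y * x⁻¹ := by
          have h1 := congrArg (fun σ : MulAut G => σ y) (h α (MulAut.conj x))
          simpa [MulAut.mul_apply, MulAut.conj_apply, map_mul, map_inv,
            mul_assoc] using h1
        have h2 := congrArg (fun t => x⁻¹ * t * α x) key
        simp only [mul_assoc, inv_mul_cancel, mul_one, inv_mul_cancel_left] at h2
        -- h2 : x⁻¹ * (α x * α y) = α y * (x⁻¹ * α x)  (roughly)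
        simp only [mul_assoc] at h2 ⊢
        exact h2.symm
      have hx : α x * x⁻¹ = x⁻¹ * α x := by
        have h3 := Subgroup.mem_center_iff.mp hc x
        -- h3 : x * (x⁻¹ * α x) = (x⁻¹ * α x) * x  (roughly, order)
        group
        group at h3
        conv_lhs => rw [h3]
        group
      rw [hx]; exact hc
    · -- commuting central endomorphisms
      intro f g hf hf1 hg hg1
      -- build automorphisms x ↦ f x * x and x ↦ g x * x
      have mkhom : ∀ (f : G →* G), (∀ x : G, f x ∈ Subgroup.center G) →
          ∀ a b : G, f (a * b) * (a * b) = (f a * a) * (f b * b) := by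
        intro f hf a b
        have := Subgroup.mem_center_iff.mp (hf b) a
        rw [map_mul]
        rw [mul_assoc, mul_assoc, ← mul_assoc a (f b) b, this]
        group
      let F : G →* G :=
        { toFun := fun x => f x * x
          map_one' := by simp
          map_mul' := fun a b => mkhom f hf a b }
      let Gm : G →* G :=
        { toFun := fun x => g x * x
          map_one' := by simp
          map_mul' := fun a b => mkhom g hg a b }
      have Finj : Function.Injective F := by
        rw [injective_iff_map_eq_one]
        intro a ha
        apply hf1
        exact eq_inv_of_mul_eq_one_left ha
      have Ginj : Function.Injective Gm := by
        rw [injective_iff_map_eq_one]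
        intro a ha
        apply hg1
        exact eq_inv_of_mul_eq_one_left ha
      let e₁ : MulAut G := MulEquiv.ofBijective F ⟨Finj, hco F Finj⟩
      let e₂ : MulAut G := MulEquiv.ofBijective Gm ⟨Ginj, hco Gm Ginj⟩
      ext x
      have hx := congrArg (fun σ : MulAut G => σ x) (h e₁ e₂)
      simp only [MulAut.mul_apply] at hx
      have hx' : f (g x * x) * (g x * x) = g (f x * x) * (f x * x) := hx
      rw [map_mul, map_mul] at hx'
      have hcomm : f x * g x = g x * f x := Subgroup.mem_center_iff.mp (hg x) (f x)
      have : f (g x) = g (f x) := by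
        have h4 : f (g x) * (f x * (g x * x)) = g (f x) * (g x * (f x * x)) := by
          simpa [mul_assoc] using hx'
        rw [← mul_assoc (g x) (f x) x, ← hcomm, mul_assoc] at h4
        exact mul_right_cancel h4
      simpa using this
  · intro ⟨ha, hb⟩ α β
    -- build central endomorphisms from α, β
    have mkend : ∀ (α : MulAut G), ∀ a b : G,
        α (a * b) * (a * b)⁻¹ = (α a * a⁻¹) * (α b * b⁻¹) := by
      intro α a b
      have := Subgroup.mem_center_iff.mp (ha α b) a⁻¹
      rw [map_mul, mul_inv_rev]
      rw [mul_assoc, ← mul_assoc (α b) b⁻¹ a⁻¹]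
      rw [← this]
      group
    let f : G →* G :=
      { toFun := fun x => α x * x⁻¹
        map_one' := by simp
        map_mul' := fun a b => mkend α a b }
    let g : G →* G :=
      { toFun := fun x => β x * x⁻¹
        map_one' := by simp
        map_mul' := fun a b => mkend β a b }
    have hf1 : ∀ x : G, f x = x⁻¹ → x = 1 := by
      intro x hx
      have : α x * x⁻¹ = x⁻¹ := hx
      have hαx : α x = 1 := by
        have := congrArg (fun t => t * x) this
        simpa using this
      have := α.injective (a₁ := x) (a₂ := 1) (by simpa using hαx)
      simpa using this
    have hg1 : ∀ x : G, g x = x⁻¹ → x = 1 := by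
      intro x hx
      have : β x * x⁻¹ = x⁻¹ := hx
      have hβx : β x = 1 := by
        have := congrArg (fun t => t * x) this
        simpa using this
      have := β.injective (a₁ := x) (a₂ := 1) (by simpa using hβx)
      simpa using this
    have hcom := hb f g (fun x => ha α x) hf1 (fun x => ha β x) hg1
    ext x
    have hpt : f (g x) = g (f x) := by
      have := congrArg (fun φ : G →* G => φ x) hcom
      simpa using this
    -- expand
    have hfx : ∀ y : G, α y = f y * y := by intro y; show α y = α y * y⁻¹ * y; group
    have hgx : ∀ y : G, β y = g y * y := by intro y; show β y = β y * y⁻¹ * y; group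
    have hcomm : f x * g x = g x * f x := Subgroup.mem_center_iff.mp (ha β x) (f x)
    show α (β x) = β (α x)
    rw [hgx x, hfx (g x * x), map_mul, hfx x, hgx (f x * x), map_mul]
    rw [hpt, mul_assoc, mul_assoc, ← mul_assoc (f x) (g x) x, hcomm, mul_assoc]
end

section
/- For every prime p and every admissible pair λ ∈ {(1,0)} ∪ {(i,1) : 0 ≤ i ≤ p−1}, the JK-group G = G_λ^(p) is a finite group of order p^8; its center Z(G) equals its commutator subgroup [G,G]; Z(G) has order p^4 and exponent p (z^p = 1 for all z ∈ Z(G)); and g^p ∈ Z(G) for every g ∈ G, so that the quotient G/Z(G) is elementary abelian of order p^4. -/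
def gcomm {G : Type*} [Group G] (x y : G) : G := x⁻¹ * y⁻¹ * x * y

def jkRels (p : ℕ) (lam : ℕ × ℕ) : Set (FreeGroup (Fin 4)) :=
  {r | ∃ i j k : Fin 4,
      r = gcomm (gcomm (FreeGroup.of i) (FreeGroup.of j)) (FreeGroup.of k)} ∪
  {FreeGroup.of 0 ^ p * (gcomm (FreeGroup.of 0) (FreeGroup.of 2))⁻¹,
   FreeGroup.of 1 ^ p *
     (gcomm (FreeGroup.of 0) (FreeGroup.of 2 ^ lam.1 * FreeGroup.of 3 ^ lam.2))⁻¹,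
   FreeGroup.of 2 ^ p * (gcomm (FreeGroup.of 1) (FreeGroup.of 2 * FreeGroup.of 3))⁻¹,
   FreeGroup.of 3 ^ p * (gcomm (FreeGroup.of 1) (FreeGroup.of 3))⁻¹,
   gcomm (FreeGroup.of 0) (FreeGroup.of 1),
   gcomm (FreeGroup.of 2) (FreeGroup.of 3)}

abbrev JKGroup (p : ℕ) (lam : ℕ × ℕ) : Type := PresentedGroup (jkRels p lam)

def jka₁ (p : ℕ) (lam : ℕ × ℕ) : JKGroup p lam := PresentedGroup.of 0
def jka₂ (p : ℕ) (lam : ℕ × ℕ) : JKGroup p lam := PresentedGroup.of 1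
def jkb₁ (p : ℕ) (lam : ℕ × ℕ) : JKGroup p lam := PresentedGroup.of 2
def jkb₂ (p : ℕ) (lam : ℕ × ℕ) : JKGroup p lam := PresentedGroup.of 3

namespace JKP

open scoped commutatorElement

section Toolkit
variable {G : Type*} [Group G]

def Central (c : G) : Prop := ∀ g : G, c * g = g * c

lemma Central.one : Central (1 : G) := fun g => by simp

lemma Central.mul {c d : G} (hc : Central c) (hd : Central d) : Central (c * d) := fun g => by
  rw [mul_assoc, hd g, ← mul_assoc, hc g, mul_assoc]

lemma Central.inv {c : G} (hc : Central c) : Central c⁻¹ := fun g => by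
  calc c⁻¹ * g = c⁻¹ * (g * c) * c⁻¹ := by group
  _ = c⁻¹ * (c * g) * c⁻¹ := by rw [hc g]
  _ = g * c⁻¹ := by group

lemma Central.pow {c : G} (hc : Central c) (n : ℕ) : Central (c ^ n) := by
  induction n with
  | zero => simpa using Central.one
  | succ n ih => rw [pow_succ]; exact ih.mul hc

lemma mul_eq_of_gcomm {x y c : G} (h : gcomm x y = c) : x * y = y * x * c := by
  rw [← h, gcomm]; group

lemma gcomm_eq_of_mul_eq {x y c : G} (h : x * y = y * x * c) : gcomm x y = c := by
  have : gcomm x y = x⁻¹ * y⁻¹ * (x * y) := by rw [gcomm]; group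
  rw [this, h]; group

lemma gcomm_eq_one_iff {x y : G} : gcomm x y = 1 ↔ x * y = y * x := by
  constructor
  · intro h; have := mul_eq_of_gcomm h; simpa using this
  · intro h; exact gcomm_eq_of_mul_eq (by simp [h])

lemma Central.gcomm_left {c : G} (hc : Central c) (y : G) : gcomm c y = 1 :=
  gcomm_eq_one_iff.mpr (hc y)

lemma Central.gcomm_right {c : G} (hc : Central c) (y : G) : gcomm y c = 1 :=
  gcomm_eq_one_iff.mpr (hc y).symm

lemma swap_pow {x y c : G} (hc : Central c) (h : y * x = x * y * c) (n : ℕ) :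
    y ^ n * x = x * y ^ n * c ^ n := by
  induction n with
  | zero => simp
  | succ n ih =>
    calc y ^ (n+1) * x = y ^ n * (y * x) := by rw [pow_succ, mul_assoc]
    _ = y ^ n * (x * y * c) := by rw [h]
    _ = (y ^ n * x) * y * c := by group
    _ = (x * y ^ n * c ^ n) * y * c := by rw [ih]
    _ = x * y ^ n * (c ^ n * y) * c := by group
    _ = x * y ^ n * (y * c ^ n) * c := by rw [(hc.pow n) y]
    _ = x * y ^ (n+1) * c ^ (n+1) := by rw [pow_succ, pow_succ]; group

lemma gcomm_mul_right {x y z c d : G} (hc : Central c) (hd : Central d)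
    (h1 : gcomm x y = c) (h2 : gcomm x z = d) : gcomm x (y * z) = c * d := by
  apply gcomm_eq_of_mul_eq
  have e1 := mul_eq_of_gcomm h1
  have e2 := mul_eq_of_gcomm h2
  calc x * (y * z) = (x * y) * z := by group
  _ = y * x * c * z := by rw [e1]
  _ = y * (x * z) * c := by rw [mul_assoc (y*x) c z, hc z, ← mul_assoc, mul_assoc y x z]
  _ = y * (z * x * d) * c := by rw [e2]
  _ = y * z * x * (d * c) := by group
  _ = y * z * x * (c * d) := by rw [hd c]

lemma gcomm_pow_right {x y c : G} (hc : Central c) (h1 : gcomm x y = c) (n : ℕ) :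
    gcomm x (y ^ n) = c ^ n := by
  induction n with
  | zero => simp [gcomm]
  | succ n ih =>
    rw [pow_succ, gcomm_mul_right (hc.pow n) hc ih h1, pow_succ]

lemma gcomm_pow_left {x y c : G} (hc : Central c) (h1 : gcomm x y = c) (n : ℕ) :
    gcomm (x ^ n) y = c ^ n := by
  apply gcomm_eq_of_mul_eq
  have h : x * y = y * x * c := mul_eq_of_gcomm h1
  exact swap_pow hc (by rw [h]) n

lemma mul_swap (x y : G) : y * x = x * y * (gcomm x y)⁻¹ := by
  rw [gcomm]; group

lemma cmove {u : G} (hu : Central u) (v w : G) : u * (v * w) = v * (u * w) := by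
  rw [← mul_assoc, hu v, mul_assoc]

lemma comm_tail {x y : G} (h : Commute y x) (w : G) : y * (x * w) = x * (y * w) := by
  rw [← mul_assoc, h.eq, mul_assoc]

lemma swap_pow_tail {x y c : G} (hc : Central c) (h : y * x = x * y * c) (n : ℕ) (w : G) :
    y ^ n * (x * w) = x * (y ^ n * (c ^ n * w)) := by
  rw [← mul_assoc, swap_pow hc h n, mul_assoc, mul_assoc]

lemma pow_collect {c t : G} {p : ℕ} (h : c ^ p = t) (m : ℕ) :
    c ^ m = c ^ (m % p) * t ^ (m / p) := by
  conv_lhs => rw [← Nat.mod_add_div m p, pow_add, pow_mul, h]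

lemma pow_mod {c : G} {p : ℕ} (h : c ^ p = 1) (n : ℕ) : c ^ n = c ^ (n % p) := by
  conv_lhs => rw [← Nat.mod_add_div n p, pow_add, pow_mul, h, one_pow, mul_one]

lemma pow_val_add {p : ℕ} [NeZero p] {c : G} (h : c ^ p = 1) (x y : ZMod p) :
    c ^ (x + y).val = c ^ x.val * c ^ y.val := by
  rw [← pow_add, ZMod.val_add, ← pow_mod h]

lemma pow_val_add_nat {p : ℕ} [NeZero p] {c : G} (h : c ^ p = 1) (x : ZMod p) (n : ℕ) :
    c ^ (x + (n : ZMod p)).val = c ^ x.val * c ^ n := by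
  rw [pow_val_add h, ZMod.val_natCast, ← pow_mod h]

lemma inv_eq_pow_pred {p : ℕ} (hp : 0 < p) {c : G} (h : c ^ p = 1) : c⁻¹ = c ^ (p - 1) := by
  rw [inv_eq_iff_mul_eq_one, ← pow_succ', Nat.sub_add_cancel hp, h]

end Toolkit

section Model

variable (p : ℕ) (lam : ℕ × ℕ)

def carry {p : ℕ} (a b : ZMod p) : ℕ := (a.val + b.val) / p

def bilV {p : ℕ} (x y : Fin 4 → ZMod p) : Fin 4 → ZMod p :=
  ![x 0 * y 2, x 0 * y 3, x 1 * y 2, x 1 * y 3]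

def tV : Fin 4 → Fin 4 → ZMod p :=
  ![![1,0,0,0], ![(lam.1 : ZMod p), (lam.2 : ZMod p),0,0], ![0,0,1,1], ![0,0,0,1]]

def FV (x y : Fin 4 → ZMod p) : Fin 4 → ZMod p :=
  bilV x y + ∑ i : Fin 4, carry (x i) (y i) • tV p lam i

variable {p lam}

lemma bilV_add_left (x x' y : Fin 4 → ZMod p) :
    bilV (x + x') y = bilV x y + bilV x' y := by
  funext j; fin_cases j <;> simp [bilV] <;> ring

lemma bilV_add_right (x y y' : Fin 4 → ZMod p) :
    bilV x (y + y') = bilV x y + bilV x y' := by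
  funext j; fin_cases j <;> simp [bilV] <;> ring

lemma bilV_zero_left (y : Fin 4 → ZMod p) : bilV 0 y = 0 := by
  funext j; fin_cases j <;> simp [bilV]

lemma bilV_zero_right (x : Fin 4 → ZMod p) : bilV x 0 = 0 := by
  funext j; fin_cases j <;> simp [bilV]

section carrylemmas
variable [NeZero p]

lemma carry_zero_left (a : ZMod p) : carry 0 a = 0 := by
  simp [carry, Nat.div_eq_of_lt (ZMod.val_lt a)]

lemma carry_zero_right (a : ZMod p) : carry a 0 = 0 := by
  simp [carry, Nat.div_eq_of_lt (ZMod.val_lt a)]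

lemma carry_comm (a b : ZMod p) : carry a b = carry b a := by
  simp [carry, Nat.add_comm]

private lemma div_aux (x D : ℕ) : (x % p + D) / p + x / p = (x + D) / p := by
  conv_rhs => rw [← Nat.mod_add_div x p, add_right_comm,
    Nat.add_mul_div_left _ _ (Nat.pos_of_ne_zero (NeZero.ne p))]

lemma carry_cocycle (a b d : ZMod p) :
    carry a b + carry (a + b) d = carry b d + carry a (b + d) := by
  unfold carry
  rw [ZMod.val_add a b, ZMod.val_add b d]
  have h1 : ((a.val + b.val) % p + d.val) / p + (a.val + b.val) / p
      = (a.val + b.val + d.val) / p := div_aux _ _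
  have h2 : ((b.val + d.val) % p + a.val) / p + (b.val + d.val) / p
      = (b.val + d.val + a.val) / p := div_aux _ _
  rw [add_comm ((b.val+d.val)%p) a.val] at h2
  rw [show b.val + d.val + a.val = a.val + b.val + d.val by omega] at h2
  omega

end carrylemmas

variable [NeZero p]

lemma FV_cocycle (a b d : Fin 4 → ZMod p) :
    FV p lam a b + FV p lam (a + b) d = FV p lam b d + FV p lam a (b + d) := by
  unfold FV
  have hb : bilV a b + bilV (a+b) d = bilV b d + bilV a (b+d) := by
    rw [bilV_add_left, bilV_add_right]; abel
  have hc : (∑ i : Fin 4, carry (a i) (b i) • tV p lam i)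
      + (∑ i : Fin 4, carry ((a+b) i) (d i) • tV p lam i)
      = (∑ i : Fin 4, carry (b i) (d i) • tV p lam i)
      + (∑ i : Fin 4, carry (a i) ((b+d) i) • tV p lam i) := by
    rw [← Finset.sum_add_distrib, ← Finset.sum_add_distrib]
    apply Finset.sum_congr rfl
    intro i _
    rw [← add_smul, ← add_smul]
    simp only [Pi.add_apply]
    rw [carry_cocycle]
  calc bilV a b + (∑ i : Fin 4, carry (a i) (b i) • tV p lam i)
      + (bilV (a+b) d + ∑ i : Fin 4, carry ((a+b) i) (d i) • tV p lam i)
      = (bilV a b + bilV (a+b) d) + ((∑ i : Fin 4, carry (a i) (b i) • tV p lam i)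
        + ∑ i : Fin 4, carry ((a+b) i) (d i) • tV p lam i) := by abel
  _ = (bilV b d + bilV a (b+d)) + ((∑ i : Fin 4, carry (b i) (d i) • tV p lam i)
        + ∑ i : Fin 4, carry (a i) ((b+d) i) • tV p lam i) := by rw [hb, hc]
  _ = _ := by abel

lemma FV_zero_left (y : Fin 4 → ZMod p) : FV p lam 0 y = 0 := by
  unfold FV
  rw [bilV_zero_left]
  simp [carry_zero_left]

lemma FV_zero_right (x : Fin 4 → ZMod p) : FV p lam x 0 = 0 := by
  unfold FV
  rw [bilV_zero_right]
  simp [carry_zero_right]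

lemma FV_sub_symm (x y : Fin 4 → ZMod p) :
    FV p lam x y - FV p lam y x = bilV x y - bilV y x := by
  unfold FV
  have : (∑ i : Fin 4, carry (x i) (y i) • tV p lam i)
      = ∑ i : Fin 4, carry (y i) (x i) • tV p lam i := by
    apply Finset.sum_congr rfl; intro i _; rw [carry_comm]
  rw [this]; abel

@[ext] structure M (p : ℕ) (lam : ℕ × ℕ) where
  a : Fin 4 → ZMod p
  z : Fin 4 → ZMod p

instance : Group (M p lam) where
  mul x y := ⟨x.a + y.a, x.z + y.z + FV p lam x.a y.a⟩
  one := ⟨0, 0⟩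
  inv x := ⟨-x.a, -x.z - FV p lam (-x.a) x.a⟩
  mul_assoc x y w := by
    ext j
    · show (x.a + y.a + w.a) j = (x.a + (y.a + w.a)) j
      rw [add_assoc]
    · show (x.z + y.z + FV p lam x.a y.a + w.z + FV p lam (x.a + y.a) w.a) j
        = (x.z + (y.z + w.z + FV p lam y.a w.a) + FV p lam x.a (y.a + w.a)) j
      have := FV_cocycle (lam := lam) x.a y.a w.a
      have h2 : x.z + y.z + FV p lam x.a y.a + w.z + FV p lam (x.a + y.a) w.a
          = x.z + (y.z + w.z + FV p lam y.a w.a) + FV p lam x.a (y.a + w.a) := by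
        rw [show x.z + y.z + FV p lam x.a y.a + w.z + FV p lam (x.a + y.a) w.a
          = x.z + y.z + w.z + (FV p lam x.a y.a + FV p lam (x.a + y.a) w.a) by abel, this]
        abel
      rw [h2]
  one_mul x := by
    ext j
    · show ((0 : Fin 4 → ZMod p) + x.a) j = x.a j; simp
    · show ((0 : Fin 4 → ZMod p) + x.z + FV p lam 0 x.a) j = x.z j
      rw [FV_zero_left]; simp
  mul_one x := by
    ext j
    · show (x.a + (0 : Fin 4 → ZMod p)) j = x.a j; simp
    · show (x.z + (0 : Fin 4 → ZMod p) + FV p lam x.a 0) j = x.z j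
      rw [FV_zero_right]; simp
  inv_mul_cancel x := by
    ext j
    · show (-x.a + x.a) j = (0 : Fin 4 → ZMod p) j; simp
    · show (-x.z - FV p lam (-x.a) x.a + x.z + FV p lam (-x.a) x.a) j
        = (0 : Fin 4 → ZMod p) j
      simp only [Pi.add_apply, Pi.sub_apply, Pi.neg_apply, Pi.zero_apply]
      ring

variable (p lam)

lemma M.mul_def (x y : M p lam) :
    x * y = ⟨x.a + y.a, x.z + y.z + FV p lam x.a y.a⟩ := rfl

lemma M.one_def : (1 : M p lam) = ⟨0, 0⟩ := rfl

variable {p lam}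

lemma commutatorElement_eq_of_mul_eq {G : Type*} [Group G] {x y c : G}
    (h : x * y = y * x * c) (hc : Central c) : ⁅x, y⁆ = c := by
  rw [commutatorElement_def, h]
  calc y * x * c * x⁻¹ * y⁻¹ = y * x * (c * x⁻¹) * y⁻¹ := by group
  _ = y * x * (x⁻¹ * c) * y⁻¹ := by rw [hc x⁻¹]
  _ = y * (c * y⁻¹) := by group
  _ = y * (y⁻¹ * c) := by rw [hc y⁻¹]
  _ = c := by group

lemma M.mul_def' (x y : M p lam) :
    x * y = ⟨x.a + y.a, x.z + y.z + FV p lam x.a y.a⟩ := rfl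

lemma M.inv_a (x : M p lam) : (x⁻¹).a = -x.a := rfl

lemma M.cz_mul (w w' : Fin 4 → ZMod p) :
    (⟨0, w⟩ : M p lam) * ⟨0, w'⟩ = ⟨0, w + w'⟩ := by
  rw [M.mul_def', FV_zero_left]; simp

lemma M.central_cz (w : Fin 4 → ZMod p) : Central (⟨0, w⟩ : M p lam) := by
  intro g
  rw [M.mul_def', M.mul_def', FV_zero_left, FV_zero_right]
  ext j <;> simp <;> ring

lemma M.cz_pow (w : Fin 4 → ZMod p) (n : ℕ) :
    (⟨0, w⟩ : M p lam) ^ n = ⟨0, n • w⟩ := by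
  induction n with
  | zero => simp [M.one_def]
  | succ n ih => rw [pow_succ, ih, M.cz_mul, succ_nsmul]

lemma M.mul_comm_c (x y : M p lam) :
    x * y = y * x * ⟨0, bilV x.a y.a - bilV y.a x.a⟩ := by
  rw [M.mul_def', M.mul_def', M.mul_def', FV_zero_right]
  ext j
  · simp [add_comm]
  · have h := congrFun (FV_sub_symm (lam := lam) x.a y.a) j
    simp only [Pi.add_apply, Pi.sub_apply, Pi.zero_apply] at h ⊢
    linear_combination h

lemma M.gcomm_eq (x y : M p lam) :
    gcomm x y = ⟨0, bilV x.a y.a - bilV y.a x.a⟩ :=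
  gcomm_eq_of_mul_eq (M.mul_comm_c x y)

lemma M.commutatorElement_eq (x y : M p lam) :
    ⁅x, y⁆ = ⟨0, bilV x.a y.a - bilV y.a x.a⟩ :=
  commutatorElement_eq_of_mul_eq (M.mul_comm_c x y) (M.central_cz _)

lemma M.pow_a (x : M p lam) (n : ℕ) : (x ^ n).a = n • x.a := by
  induction n with
  | zero => simp [M.one_def]
  | succ n ih =>
    rw [pow_succ, M.mul_def']
    show (x ^ n).a + x.a = _
    rw [ih, succ_nsmul]

def εV (p : ℕ) : Fin 4 → Fin 4 → ZMod p := fun i j => if j = i then 1 else 0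

def gen (p : ℕ) (lam : ℕ × ℕ) (i : Fin 4) : M p lam := ⟨εV p i, 0⟩

lemma smul_p_vec (w : Fin 4 → ZMod p) : p • w = 0 := by
  funext j
  show p • (w j) = 0
  rw [nsmul_eq_mul, ZMod.natCast_self, zero_mul]

lemma M.mem_center_iff' (x : M p lam) :
    x ∈ Subgroup.center (M p lam) ↔ x.a = 0 := by
  rw [Subgroup.mem_center_iff]
  constructor
  · intro h
    have key : ∀ i : Fin 4, bilV (εV p i) x.a = bilV x.a (εV p i) := by
      intro i
      have h2 := h (gen p lam i)
      rw [M.mul_def', M.mul_def'] at h2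
      have h3 : FV p lam (εV p i) x.a = FV p lam x.a (εV p i) := by
        have := congrArg M.z h2
        simp only at this
        have h4 : (gen p lam i).z + x.z = x.z + (gen p lam i).z := by rw [add_comm]
        -- this : gen.z + x.z + FV ε x.a = x.z + gen.z + FV x.a ε
        rw [show (gen p lam i).z + x.z + FV p lam (gen p lam i).a x.a
            = x.z + (gen p lam i).z + FV p lam (gen p lam i).a x.a by rw [h4]] at this
        exact add_left_cancel this
      have h5 := FV_sub_symm (lam := lam) (εV p i) x.a
      rw [h3] at h5
      have : (0 : Fin 4 → ZMod p) = bilV (εV p i) x.a - bilV x.a (εV p i) := by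
        rw [← h5]; abel
      have := congrArg (· + bilV x.a (εV p i)) this
      simpa [sub_add_cancel] using this.symm
    funext j
    fin_cases j
    · have := congrFun (key 2) 0
      simpa [bilV, εV, Matrix.vecHead, Matrix.vecTail] using this.symm
    · have := congrFun (key 2) 2
      simpa [bilV, εV, Matrix.vecHead, Matrix.vecTail] using this.symm
    · have := congrFun (key 0) 0
      simpa [bilV, εV, Matrix.vecHead, Matrix.vecTail] using this
    · have := congrFun (key 0) 1
      simpa [bilV, εV, Matrix.vecHead, Matrix.vecTail] using this
  · intro h g
    obtain ⟨xa, xz⟩ := x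
    simp only at h
    subst h
    exact (M.central_cz xz g).symm

lemma M.commutator_eq_center :
    commutator (M p lam) = Subgroup.center (M p lam) := by
  apply le_antisymm
  · rw [commutator_def, Subgroup.commutator_le]
    intro g _ h _
    rw [M.mem_center_iff', M.commutatorElement_eq]
  · intro x hx
    rw [M.mem_center_iff'] at hx
    obtain ⟨xa, xz⟩ := x
    simp only at hx
    subst hx
    have hc : ∀ i j : Fin 4, (⁅gen p lam i, gen p lam j⁆ : M p lam) ∈ commutator (M p lam) := by
      intro i j
      rw [commutator_def]
      exact Subgroup.commutator_mem_commutator (Subgroup.mem_top _) (Subgroup.mem_top _)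
    have key : (⟨0, xz⟩ : M p lam)
        = ⁅gen p lam 0, gen p lam 2⁆ ^ (xz 0).val * ⁅gen p lam 0, gen p lam 3⁆ ^ (xz 1).val
          * ⁅gen p lam 1, gen p lam 2⁆ ^ (xz 2).val * ⁅gen p lam 1, gen p lam 3⁆ ^ (xz 3).val := by
      rw [M.commutatorElement_eq, M.commutatorElement_eq, M.commutatorElement_eq,
        M.commutatorElement_eq]
      rw [M.cz_pow, M.cz_pow, M.cz_pow, M.cz_pow, M.cz_mul, M.cz_mul, M.cz_mul]
      congr 1
      funext j
      fin_cases j <;>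
        simp [gen, bilV, εV, smul_eq_mul, ZMod.natCast_zmod_val] <;> ring_nf <;>
        simp [ZMod.natCast_zmod_val]
    rw [key]
    exact Subgroup.mul_mem _ (Subgroup.mul_mem _ (Subgroup.mul_mem _
      (Subgroup.pow_mem _ (hc 0 2) _) (Subgroup.pow_mem _ (hc 0 3) _))
      (Subgroup.pow_mem _ (hc 1 2) _)) (Subgroup.pow_mem _ (hc 1 3) _)

def M.equivProd : M p lam ≃ (Fin 4 → ZMod p) × (Fin 4 → ZMod p) where
  toFun x := (x.a, x.z)
  invFun y := ⟨y.1, y.2⟩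
  left_inv x := rfl
  right_inv y := rfl

instance : Finite (M p lam) := Finite.of_equiv _ (M.equivProd (p := p) (lam := lam)).symm

lemma M.card : Nat.card (M p lam) = p ^ 8 := by
  rw [Nat.card_congr (M.equivProd (p := p) (lam := lam)), Nat.card_prod, Nat.card_pi]
  simp [Nat.card_zmod]
  ring_nf

def M.centerEquiv : Subgroup.center (M p lam) ≃ (Fin 4 → ZMod p) where
  toFun x := x.1.z
  invFun w := ⟨⟨0, w⟩, by rw [M.mem_center_iff']⟩
  left_inv x := by
    apply Subtype.ext
    have := (M.mem_center_iff' x.1).mp x.2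
    ext j
    · rw [this]
    · rfl
  right_inv w := rfl

lemma M.card_center : Nat.card (Subgroup.center (M p lam)) = p ^ 4 := by
  rw [Nat.card_congr (M.centerEquiv (p := p) (lam := lam)), Nat.card_pi]
  simp [Nat.card_zmod]

lemma M.center_pow_p (x : M p lam) (hx : x ∈ Subgroup.center (M p lam)) : x ^ p = 1 := by
  rw [M.mem_center_iff'] at hx
  obtain ⟨xa, xz⟩ := x
  simp only at hx
  subst hx
  rw [M.cz_pow, smul_p_vec, M.one_def]

lemma M.pow_p_center (x : M p lam) : x ^ p ∈ Subgroup.center (M p lam) := by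
  rw [M.mem_center_iff', M.pow_a, smul_p_vec]

lemma map_gcomm {G H : Type*} [Group G] [Group H] (f : G →* H) (x y : G) :
    f (gcomm x y) = gcomm (f x) (f y) := by
  simp [gcomm, map_mul, map_inv]

end Model

section ModelRel
variable {p : ℕ} {lam : ℕ × ℕ} [NeZero p] [Fact (1 < p)]

lemma εV_diag (i : Fin 4) : εV p i i = 1 := by simp [εV]

lemma εV_off {i k : Fin 4} (h : k ≠ i) : εV p i k = 0 := by simp [εV, h]

lemma bilV_smul_single_self (i : Fin 4) (m : ℕ) :
    bilV (m • εV p i) (εV p i) = 0 := by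
  funext j
  fin_cases i <;> fin_cases j <;> simp [bilV, εV]

lemma FV_single (i : Fin 4) (m : ℕ) :
    FV p lam (m • εV p i) (εV p i) = ((m % p + 1) / p) • tV p lam i := by
  unfold FV
  rw [bilV_smul_single_self, zero_add]
  rw [Finset.sum_eq_single_of_mem i (Finset.mem_univ i)]
  · congr 1
    show carry (m • εV p i i) (εV p i i) = (m % p + 1) / p
    rw [εV_diag]
    show carry ((m : ℕ) • (1 : ZMod p)) 1 = (m % p + 1) / p
    rw [nsmul_eq_mul, mul_one]
    unfold carry
    rw [ZMod.val_natCast, ZMod.val_one]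
  · intro k _ hk
    have h1 : εV p i k = 0 := εV_off hk
    have h2 : (m • εV p i) k = m • εV p i k := rfl
    rw [h2, h1, carry_zero_right, zero_smul]

lemma gen_pow_lt (i : Fin 4) : ∀ n, n < p → (gen p lam i) ^ n = ⟨n • εV p i, 0⟩ := by
  intro n
  induction n with
  | zero => intro _; rw [pow_zero, zero_nsmul]; rfl
  | succ n ih =>
    intro hn
    rw [pow_succ, ih (Nat.lt_of_succ_lt hn)]
    show (⟨n • εV p i, 0⟩ : M p lam) * ⟨εV p i, 0⟩ = _
    simp only [M.mul_def']
    rw [FV_single]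
    rw [Nat.mod_eq_of_lt (Nat.lt_of_succ_lt hn), Nat.div_eq_of_lt hn, zero_smul]
    ext j
    · show (n • εV p i + εV p i) j = ((n+1) • εV p i) j
      rw [succ_nsmul]
    · show ((0 : Fin 4 → ZMod p) + 0 + 0) j = (0 : Fin 4 → ZMod p) j
      simp

lemma gen_pow_p (i : Fin 4) : (gen p lam i) ^ p = ⟨0, tV p lam i⟩ := by
  have hp1 : 1 < p := Fact.out
  have hp0 : 0 < p := by omega
  have h1 : (gen p lam i) ^ p = (gen p lam i) ^ (p - 1) * gen p lam i := by
    rw [← pow_succ, Nat.sub_add_cancel hp0]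
  rw [h1, gen_pow_lt i (p-1) (by omega)]
  show (⟨(p-1) • εV p i, 0⟩ : M p lam) * ⟨εV p i, 0⟩ = _
  simp only [M.mul_def']
  rw [FV_single]
  rw [Nat.mod_eq_of_lt (by omega), show p - 1 + 1 = p by omega, Nat.div_self hp0, one_smul]
  ext j
  · show ((p-1) • εV p i + εV p i) j = (0 : Fin 4 → ZMod p) j
    rw [← succ_nsmul, show p - 1 + 1 = p by omega, smul_p_vec]
  · show ((0 : Fin 4 → ZMod p) + 0 + tV p lam i) j = tV p lam i j
    simp

lemma M.gcomm_triple (x y w : M p lam) : gcomm (gcomm x y) w = 1 := by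
  rw [M.gcomm_eq x y]
  exact (M.central_cz _).gcomm_left w

lemma R1 : (gen p lam 0) ^ p = gcomm (gen p lam 0) (gen p lam 2) := by
  rw [gen_pow_p, M.gcomm_eq]
  ext j
  · rfl
  · show tV p lam 0 j
      = (bilV (gen p lam 0).a (gen p lam 2).a - bilV (gen p lam 2).a (gen p lam 0).a) j
    fin_cases j <;> simp [tV, bilV, εV, gen, Matrix.vecHead, Matrix.vecTail]

lemma R2 : (gen p lam 1) ^ p
    = gcomm (gen p lam 0) ((gen p lam 2) ^ lam.1 * (gen p lam 3) ^ lam.2) := by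
  rw [gen_pow_p, M.gcomm_eq]
  have ha : ((gen p lam 2) ^ lam.1 * (gen p lam 3) ^ lam.2).a
      = lam.1 • εV p 2 + lam.2 • εV p 3 := by
    show ((gen p lam 2) ^ lam.1).a + ((gen p lam 3) ^ lam.2).a = _
    rw [M.pow_a, M.pow_a]
    rfl
  rw [ha]
  ext j
  · rfl
  · show tV p lam 1 j
      = (bilV (gen p lam 0).a (lam.1 • εV p 2 + lam.2 • εV p 3)
        - bilV (lam.1 • εV p 2 + lam.2 • εV p 3) (gen p lam 0).a) j
    fin_cases j <;> simp [tV, bilV, εV, gen, nsmul_eq_mul, Matrix.vecHead, Matrix.vecTail]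

lemma R3 : (gen p lam 2) ^ p = gcomm (gen p lam 1) (gen p lam 2 * gen p lam 3) := by
  rw [gen_pow_p, M.gcomm_eq]
  have ha : (gen p lam 2 * gen p lam 3).a = εV p 2 + εV p 3 := rfl
  rw [ha]
  ext j
  · rfl
  · show tV p lam 2 j
      = (bilV (gen p lam 1).a (εV p 2 + εV p 3) - bilV (εV p 2 + εV p 3) (gen p lam 1).a) j
    fin_cases j <;> simp [tV, bilV, εV, gen, Matrix.vecHead, Matrix.vecTail]

lemma R4 : (gen p lam 3) ^ p = gcomm (gen p lam 1) (gen p lam 3) := by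
  rw [gen_pow_p, M.gcomm_eq]
  ext j
  · rfl
  · show tV p lam 3 j
      = (bilV (gen p lam 1).a (gen p lam 3).a - bilV (gen p lam 3).a (gen p lam 1).a) j
    fin_cases j <;> simp [tV, bilV, εV, gen, Matrix.vecHead, Matrix.vecTail]

lemma R5 : gcomm (gen p lam 0) (gen p lam 1) = 1 := by
  rw [M.gcomm_eq]
  show _ = (⟨0, 0⟩ : M p lam)
  ext j
  · rfl
  · show (bilV (gen p lam 0).a (gen p lam 1).a - bilV (gen p lam 1).a (gen p lam 0).a) j
      = (0 : Fin 4 → ZMod p) j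
    fin_cases j <;> simp [bilV, εV, gen, Matrix.vecHead, Matrix.vecTail]

lemma R6 : gcomm (gen p lam 2) (gen p lam 3) = 1 := by
  rw [M.gcomm_eq]
  show _ = (⟨0, 0⟩ : M p lam)
  ext j
  · rfl
  · show (bilV (gen p lam 2).a (gen p lam 3).a - bilV (gen p lam 3).a (gen p lam 2).a) j
      = (0 : Fin 4 → ZMod p) j
    fin_cases j <;> simp [bilV, εV, gen, Matrix.vecHead, Matrix.vecTail]

lemma relsM : ∀ r ∈ jkRels p lam,
    FreeGroup.lift (fun i => gen p lam i) r = 1 := by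
  intro r hr
  rcases hr with h | h
  · obtain ⟨i, j, k, rfl⟩ := h
    rw [map_gcomm, map_gcomm]
    simp only [FreeGroup.lift_apply_of]
    exact M.gcomm_triple _ _ _
  · simp only [Set.mem_insert_iff, Set.mem_singleton_iff] at h
    have e0 : ∀ i : Fin 4, FreeGroup.lift (fun i => gen p lam i) (FreeGroup.of i)
        = gen p lam i := fun i => FreeGroup.lift_apply_of
    rcases h with rfl | rfl | rfl | rfl | rfl | rfl <;>
      simp only [map_mul, map_pow, map_inv, map_gcomm, e0]
    · exact mul_inv_eq_one.mpr R1
    · exact mul_inv_eq_one.mpr R2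
    · exact mul_inv_eq_one.mpr R3
    · exact mul_inv_eq_one.mpr R4
    · exact R5
    · exact R6

end ModelRel

section JK
variable (p : ℕ) (lam : ℕ × ℕ)

def g : Fin 4 → JKGroup p lam := fun i => PresentedGroup.of i

lemma rel_one {r : FreeGroup (Fin 4)} (hr : r ∈ jkRels p lam) :
    PresentedGroup.mk (jkRels p lam) r = 1 := by
  have : r ∈ Subgroup.normalClosure (jkRels p lam) := Subgroup.subset_normalClosure hr
  exact (QuotientGroup.eq_one_iff r).mpr this

lemma g_eq (i : Fin 4) : g p lam i = PresentedGroup.mk (jkRels p lam) (FreeGroup.of i) := rfl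

lemma jrel_fam (i j k : Fin 4) :
    gcomm (gcomm (g p lam i) (g p lam j)) (g p lam k) = 1 := by
  have h := rel_one p lam (Or.inl ⟨i, j, k, rfl⟩)
  rwa [map_gcomm, map_gcomm, ← g_eq, ← g_eq, ← g_eq] at h

lemma jrel1 : (g p lam 0) ^ p = gcomm (g p lam 0) (g p lam 2) := by
  have h := rel_one p lam (r := FreeGroup.of 0 ^ p * (gcomm (FreeGroup.of 0) (FreeGroup.of 2))⁻¹)
    (Or.inr (by left; rfl))
  rw [map_mul, map_pow, map_inv, map_gcomm, ← g_eq, ← g_eq] at h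
  exact mul_inv_eq_one.mp h

lemma jrel2 : (g p lam 1) ^ p
    = gcomm (g p lam 0) ((g p lam 2) ^ lam.1 * (g p lam 3) ^ lam.2) := by
  have h := rel_one p lam (r := FreeGroup.of 1 ^ p *
      (gcomm (FreeGroup.of 0) (FreeGroup.of 2 ^ lam.1 * FreeGroup.of 3 ^ lam.2))⁻¹)
    (Or.inr (by right; left; rfl))
  rw [map_mul, map_pow, map_inv, map_gcomm, map_mul, map_pow, map_pow,
    ← g_eq, ← g_eq, ← g_eq] at h
  exact mul_inv_eq_one.mp h

lemma jrel3 : (g p lam 2) ^ p = gcomm (g p lam 1) (g p lam 2 * g p lam 3) := by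
  have h := rel_one p lam (r := FreeGroup.of 2 ^ p *
      (gcomm (FreeGroup.of 1) (FreeGroup.of 2 * FreeGroup.of 3))⁻¹)
    (Or.inr (by right; right; left; rfl))
  rw [map_mul, map_pow, map_inv, map_gcomm, map_mul, ← g_eq, ← g_eq, ← g_eq] at h
  exact mul_inv_eq_one.mp h

lemma jrel4 : (g p lam 3) ^ p = gcomm (g p lam 1) (g p lam 3) := by
  have h := rel_one p lam (r := FreeGroup.of 3 ^ p *
      (gcomm (FreeGroup.of 1) (FreeGroup.of 3))⁻¹)
    (Or.inr (by right; right; right; left; rfl))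
  rw [map_mul, map_pow, map_inv, map_gcomm, ← g_eq, ← g_eq] at h
  exact mul_inv_eq_one.mp h

lemma jrel5 : gcomm (g p lam 0) (g p lam 1) = 1 := by
  have h := rel_one p lam (r := gcomm (FreeGroup.of 0) (FreeGroup.of 1))
    (Or.inr (by right; right; right; right; left; rfl))
  rwa [map_gcomm, ← g_eq, ← g_eq] at h

lemma jrel6 : gcomm (g p lam 2) (g p lam 3) = 1 := by
  have h := rel_one p lam (r := gcomm (FreeGroup.of 2) (FreeGroup.of 3))
    (Or.inr (by right; right; right; right; right; rfl))
  rwa [map_gcomm, ← g_eq, ← g_eq] at h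

lemma central_gcomm (i j : Fin 4) : Central (gcomm (g p lam i) (g p lam j)) := by
  intro x
  have hx : x ∈ Subgroup.closure (Set.range (PresentedGroup.of : Fin 4 → JKGroup p lam)) := by
    rw [PresentedGroup.closure_range_of]; trivial
  refine Subgroup.closure_induction (fun y hy => ?_) (by simp) (fun a b _ _ ha hb => ?_)
    (fun a _ ha => ?_) hx
  · obtain ⟨k, rfl⟩ := hy
    exact gcomm_eq_one_iff.mp (jrel_fam p lam i j k)
  · rw [← mul_assoc, ha, mul_assoc, hb, mul_assoc]
  · have : Commute (gcomm (g p lam i) (g p lam j)) a := ha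
    exact this.inv_right

lemma cg_mem_center (i j : Fin 4) :
    gcomm (g p lam i) (g p lam j) ∈ Subgroup.center (JKGroup p lam) :=
  Subgroup.mem_center_iff.mpr (fun y => (central_gcomm p lam i j y).symm)

def c0 : JKGroup p lam := gcomm (g p lam 0) (g p lam 2)
def c1 : JKGroup p lam := gcomm (g p lam 0) (g p lam 3)
def c2 : JKGroup p lam := gcomm (g p lam 1) (g p lam 2)
def c3 : JKGroup p lam := gcomm (g p lam 1) (g p lam 3)

lemma cent0 : Central (c0 p lam) := central_gcomm p lam 0 2
lemma cent1 : Central (c1 p lam) := central_gcomm p lam 0 3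
lemma cent2 : Central (c2 p lam) := central_gcomm p lam 1 2
lemma cent3 : Central (c3 p lam) := central_gcomm p lam 1 3

lemma hBp : (g p lam 1) ^ p = c0 p lam ^ lam.1 * c1 p lam ^ lam.2 := by
  rw [jrel2]
  exact gcomm_mul_right ((cent0 p lam).pow lam.1) ((cent1 p lam).pow lam.2)
    (gcomm_pow_right (cent0 p lam) rfl lam.1) (gcomm_pow_right (cent1 p lam) rfl lam.2)

lemma hCp : (g p lam 2) ^ p = c2 p lam * c3 p lam := by
  rw [jrel3]
  exact gcomm_mul_right (cent2 p lam) (cent3 p lam) rfl rfl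

lemma central_Bp : Central ((g p lam 1) ^ p) := by
  rw [hBp]
  exact ((cent0 p lam).pow lam.1).mul ((cent1 p lam).pow lam.2)

lemma c0_pow_p : c0 p lam ^ p = 1 := by
  have h := gcomm_pow_left (cent0 p lam) (rfl : gcomm (g p lam 0) (g p lam 2) = c0 p lam) p
  rw [jrel1] at h
  rw [← h]
  exact (cent0 p lam).gcomm_left _

lemma c1_pow_p : c1 p lam ^ p = 1 := by
  have h := gcomm_pow_left (cent1 p lam) (rfl : gcomm (g p lam 0) (g p lam 3) = c1 p lam) p
  rw [jrel1] at h
  rw [← h]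
  exact (cent0 p lam).gcomm_left _

lemma c2_pow_p : c2 p lam ^ p = 1 := by
  have h := gcomm_pow_left (cent2 p lam) (rfl : gcomm (g p lam 1) (g p lam 2) = c2 p lam) p
  rw [← h]
  exact (central_Bp p lam).gcomm_left _

lemma c3_pow_p : c3 p lam ^ p = 1 := by
  have h := gcomm_pow_left (cent3 p lam) (rfl : gcomm (g p lam 1) (g p lam 3) = c3 p lam) p
  rw [← h]
  exact (central_Bp p lam).gcomm_left _

abbrev ZC : Subgroup (JKGroup p lam) := Subgroup.center (JKGroup p lam)

def uu : Fin 4 → ZC p lam :=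
  ![⟨c0 p lam, cg_mem_center p lam 0 2⟩, ⟨c1 p lam, cg_mem_center p lam 0 3⟩,
    ⟨c2 p lam, cg_mem_center p lam 1 2⟩, ⟨c3 p lam, cg_mem_center p lam 1 3⟩]

lemma uu_coe0 : (uu p lam 0 : JKGroup p lam) = c0 p lam := rfl
lemma uu_coe1 : (uu p lam 1 : JKGroup p lam) = c1 p lam := rfl
lemma uu_coe2 : (uu p lam 2 : JKGroup p lam) = c2 p lam := rfl
lemma uu_coe3 : (uu p lam 3 : JKGroup p lam) = c3 p lam := rfl

lemma central_coe (x : ZC p lam) : Central (x : JKGroup p lam) := fun y =>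
  (Subgroup.mem_center_iff.mp x.2 y).symm

lemma uu_pow_p (i : Fin 4) : uu p lam i ^ p = 1 := by
  fin_cases i <;> apply Subtype.ext <;>
    simp only [SubmonoidClass.coe_pow, OneMemClass.coe_one]
  · exact c0_pow_p p lam
  · exact c1_pow_p p lam
  · exact c2_pow_p p lam
  · exact c3_pow_p p lam

def KF (z : Fin 4 → ZMod p) : JKGroup p lam :=
  ((uu p lam 0 ^ (z 0).val * uu p lam 1 ^ (z 1).val * uu p lam 2 ^ (z 2).val
    * uu p lam 3 ^ (z 3).val : ZC p lam) : JKGroup p lam)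

lemma KF_central (z : Fin 4 → ZMod p) : Central (KF p lam z) := central_coe p lam _

section withinst
variable [NeZero p] [Fact (1 < p)]

lemma comm_group_collect {H : Type*} [CommGroup H] (x0 x1 x2 x3 y0 y1 y2 y3 : H) :
    x0*y0*(x1*y1)*(x2*y2)*(x3*y3) = x0*x1*x2*x3*(y0*y1*y2*y3) := by
  simp only [mul_comm, mul_left_comm, mul_assoc]

open scoped IsMulCommutative in
lemma KF_add (z z' : Fin 4 → ZMod p) :
    KF p lam (z + z') = KF p lam z * KF p lam z' := by
  unfold KF
  rw [← Subgroup.coe_mul]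
  congr 1
  simp only [Pi.add_apply]
  rw [pow_val_add (uu_pow_p p lam 0), pow_val_add (uu_pow_p p lam 1),
    pow_val_add (uu_pow_p p lam 2), pow_val_add (uu_pow_p p lam 3)]
  exact comm_group_collect _ _ _ _ _ _ _ _

lemma uu_coe_pow_p (i : Fin 4) : ((uu p lam i : JKGroup p lam)) ^ p = 1 := by
  rw [← SubmonoidClass.coe_pow, uu_pow_p]
  rfl

lemma KF_single (i : Fin 4) (n : ℕ) :
    KF p lam ((n : ZMod p) • εV p i) = ((uu p lam i : JKGroup p lam)) ^ n := by
  have hval : ∀ j : Fin 4, (((n : ZMod p) • εV p i) j).val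
      = if j = i then n % p else 0 := by
    intro j
    by_cases h : j = i
    · subst h
      simp [εV, smul_eq_mul, ZMod.val_natCast]
    · simp [εV, h, smul_eq_mul, ZMod.val_zero]
  unfold KF
  simp only [Subgroup.coe_mul, SubmonoidClass.coe_pow]
  fin_cases i
  · rw [hval 0, hval 1, hval 2, hval 3, if_pos (by decide), if_neg (by decide), if_neg (by decide), if_neg (by decide)]
    simp only [pow_zero, mul_one, one_mul]
    rw [← pow_mod (uu_coe_pow_p p lam 0)]
    rfl
  · rw [hval 0, hval 1, hval 2, hval 3, if_neg (by decide), if_pos (by decide), if_neg (by decide), if_neg (by decide)]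
    simp only [pow_zero, mul_one, one_mul]
    rw [← pow_mod (uu_coe_pow_p p lam 1)]
    rfl
  · rw [hval 0, hval 1, hval 2, hval 3, if_neg (by decide), if_neg (by decide), if_pos (by decide), if_neg (by decide)]
    simp only [pow_zero, mul_one, one_mul]
    rw [← pow_mod (uu_coe_pow_p p lam 2)]
    rfl
  · rw [hval 0, hval 1, hval 2, hval 3, if_neg (by decide), if_neg (by decide), if_neg (by decide), if_pos (by decide)]
    simp only [pow_zero, mul_one, one_mul]
    rw [← pow_mod (uu_coe_pow_p p lam 3)]
    rfl

lemma gen_pow_collect {x t : JKGroup p lam} (h : x ^ p = t) (y : ZMod p) :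
    x ^ (y.val + 1) = x ^ ((y + 1).val) * t ^ (carry y 1) := by
  have h1 : (y + 1).val = (y.val + 1) % p := by
    rw [ZMod.val_add, ZMod.val_one]
  have h2 : carry y (1 : ZMod p) = (y.val + 1) / p := by
    rw [carry, ZMod.val_one]
  rw [h1, h2]
  exact pow_collect h (y.val + 1)

def NF (v : Fin 4 → ZMod p) : JKGroup p lam :=
  g p lam 0 ^ (v 0).val * g p lam 1 ^ (v 1).val * g p lam 2 ^ (v 2).val * g p lam 3 ^ (v 3).val

lemma NF_apply (v : Fin 4 → ZMod p) :
    NF p lam v = g p lam 0 ^ (v 0).val * (g p lam 1 ^ (v 1).val * (g p lam 2 ^ (v 2).val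
      * g p lam 3 ^ (v 3).val)) := by
  rw [NF, mul_assoc, mul_assoc]

lemma NF_add_e0 (v : Fin 4 → ZMod p) :
    NF p lam (v + εV p 0) = g p lam 0 ^ ((v 0) + 1).val * (g p lam 1 ^ (v 1).val
      * (g p lam 2 ^ (v 2).val * g p lam 3 ^ (v 3).val)) := by
  rw [NF_apply]
  rw [show (v + εV p 0) 0 = v 0 + 1 by rw [Pi.add_apply, εV_diag],
    show (v + εV p 0) 1 = v 1 by rw [Pi.add_apply, εV_off (by decide), add_zero],
    show (v + εV p 0) 2 = v 2 by rw [Pi.add_apply, εV_off (by decide), add_zero],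
    show (v + εV p 0) 3 = v 3 by rw [Pi.add_apply, εV_off (by decide), add_zero]]

lemma NF_add_e1 (v : Fin 4 → ZMod p) :
    NF p lam (v + εV p 1) = g p lam 0 ^ (v 0).val * (g p lam 1 ^ ((v 1) + 1).val
      * (g p lam 2 ^ (v 2).val * g p lam 3 ^ (v 3).val)) := by
  rw [NF_apply]
  rw [show (v + εV p 1) 0 = v 0 by rw [Pi.add_apply, εV_off (by decide), add_zero],
    show (v + εV p 1) 1 = v 1 + 1 by rw [Pi.add_apply, εV_diag],
    show (v + εV p 1) 2 = v 2 by rw [Pi.add_apply, εV_off (by decide), add_zero],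
    show (v + εV p 1) 3 = v 3 by rw [Pi.add_apply, εV_off (by decide), add_zero]]

lemma NF_add_e2 (v : Fin 4 → ZMod p) :
    NF p lam (v + εV p 2) = g p lam 0 ^ (v 0).val * (g p lam 1 ^ (v 1).val
      * (g p lam 2 ^ ((v 2) + 1).val * g p lam 3 ^ (v 3).val)) := by
  rw [NF_apply]
  rw [show (v + εV p 2) 0 = v 0 by rw [Pi.add_apply, εV_off (by decide), add_zero],
    show (v + εV p 2) 1 = v 1 by rw [Pi.add_apply, εV_off (by decide), add_zero],
    show (v + εV p 2) 2 = v 2 + 1 by rw [Pi.add_apply, εV_diag],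
    show (v + εV p 2) 3 = v 3 by rw [Pi.add_apply, εV_off (by decide), add_zero]]

lemma NF_add_e3 (v : Fin 4 → ZMod p) :
    NF p lam (v + εV p 3) = g p lam 0 ^ (v 0).val * (g p lam 1 ^ (v 1).val
      * (g p lam 2 ^ (v 2).val * g p lam 3 ^ ((v 3) + 1).val)) := by
  rw [NF_apply]
  rw [show (v + εV p 3) 0 = v 0 by rw [Pi.add_apply, εV_off (by decide), add_zero],
    show (v + εV p 3) 1 = v 1 by rw [Pi.add_apply, εV_off (by decide), add_zero],
    show (v + εV p 3) 2 = v 2 by rw [Pi.add_apply, εV_off (by decide), add_zero],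
    show (v + εV p 3) 3 = v 3 + 1 by rw [Pi.add_apply, εV_diag]]

lemma hp0 : 0 < p := Nat.pos_of_ne_zero (NeZero.ne p)

lemma KF_t0 (n : ℕ) : KF p lam ((n : ZMod p) • εV p 0)
    = (gcomm (g p lam 0) (g p lam 2)) ^ n := by
  rw [KF_single]; rfl

lemma KF_t1 (n : ℕ) : KF p lam ((n : ZMod p) • εV p 1)
    = (gcomm (g p lam 0) (g p lam 3)) ^ n := by
  rw [KF_single]; rfl

lemma KF_t2 (n : ℕ) : KF p lam ((n : ZMod p) • εV p 2)
    = (gcomm (g p lam 1) (g p lam 2)) ^ n := by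
  rw [KF_single]; rfl

lemma KF_t3 (n : ℕ) : KF p lam ((n : ZMod p) • εV p 3)
    = (gcomm (g p lam 1) (g p lam 3)) ^ n := by
  rw [KF_single]; rfl

lemma KF_q0 (n : ℕ) : KF p lam ((((p-1) * n : ℕ) : ZMod p) • εV p 0)
    = ((gcomm (g p lam 0) (g p lam 2))⁻¹) ^ n := by
  rw [KF_single, uu_coe0, pow_mul, ← inv_eq_pow_pred (hp0 p) (c0_pow_p p lam)]
  rfl

lemma KF_q1 (n : ℕ) : KF p lam ((((p-1) * n : ℕ) : ZMod p) • εV p 1)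
    = ((gcomm (g p lam 0) (g p lam 3))⁻¹) ^ n := by
  rw [KF_single, uu_coe1, pow_mul, ← inv_eq_pow_pred (hp0 p) (c1_pow_p p lam)]
  rfl

lemma KF_q2 (n : ℕ) : KF p lam ((((p-1) * n : ℕ) : ZMod p) • εV p 2)
    = ((gcomm (g p lam 1) (g p lam 2))⁻¹) ^ n := by
  rw [KF_single, uu_coe2, pow_mul, ← inv_eq_pow_pred (hp0 p) (c2_pow_p p lam)]
  rfl

lemma KF_q3 (n : ℕ) : KF p lam ((((p-1) * n : ℕ) : ZMod p) • εV p 3)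
    = ((gcomm (g p lam 1) (g p lam 3))⁻¹) ^ n := by
  rw [KF_single, uu_coe3, pow_mul, ← inv_eq_pow_pred (hp0 p) (c3_pow_p p lam)]
  rfl

lemma step0 (v z : Fin 4 → ZMod p) : ∃ v' z',
    NF p lam v * KF p lam z * g p lam 0 = NF p lam v' * KF p lam z' := by
  have hq0c : Central ((gcomm (g p lam 0) (g p lam 2))⁻¹) := (cent0 p lam).inv
  have hq1c : Central ((gcomm (g p lam 0) (g p lam 3))⁻¹) := (cent1 p lam).inv
  have hAB : Commute (g p lam 0) (g p lam 1) := gcomm_eq_one_iff.mp (jrel5 p lam)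
  refine ⟨v + εV p 0,
    z + ((carry (v 0) 1 : ℕ) : ZMod p) • εV p 0
      + (((p-1) * (v 2).val : ℕ) : ZMod p) • εV p 0
      + (((p-1) * (v 3).val : ℕ) : ZMod p) • εV p 1, ?_⟩
  rw [KF_add, KF_add, KF_add, KF_t0, KF_q0, KF_q1, NF_add_e0]
  -- RHS now: NFexpanded * (((KF z * c0^κ) * q0^c) * q1^d)
  rw [NF_apply]
  -- move KF z right past g0 on LHS
  rw [mul_assoc (_ * _) (KF p lam z) (g p lam 0), KF_central p lam z (g p lam 0),
    ← mul_assoc]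
  simp only [mul_assoc]
  -- LHS: g0^a * (g1^b * (g2^c * (g3^d * (g0 * KF z))))
  rw [swap_pow_tail hq1c (mul_swap (g p lam 0) (g p lam 3)) (v 3).val (KF p lam z)]
  rw [swap_pow_tail hq0c (mul_swap (g p lam 0) (g p lam 2)) (v 2).val _]
  rw [comm_tail ((hAB.pow_right (v 1).val).symm)]
  rw [← mul_assoc (g p lam 0 ^ (v 0).val) (g p lam 0) _, ← pow_succ]
  rw [gen_pow_collect p lam (jrel1 p lam) (v 0)]
  simp only [mul_assoc]
  -- now move central factors into place
  have cent0' : Central (gcomm (g p lam 0) (g p lam 2)) := cent0 p lam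
  rw [cmove ((hq0c).pow (v 2).val) (g p lam 3 ^ (v 3).val)]
  rw [cmove ((cent0').pow (carry (v 0) 1)) (g p lam 1 ^ (v 1).val)]
  rw [cmove ((cent0').pow (carry (v 0) 1)) (g p lam 2 ^ (v 2).val)]
  rw [cmove ((cent0').pow (carry (v 0) 1)) (g p lam 3 ^ (v 3).val)]
  all_goals rw [KF_central p lam z]
  all_goals simp only [mul_assoc]

lemma step1 (v z : Fin 4 → ZMod p) : ∃ v' z',
    NF p lam v * KF p lam z * g p lam 1 = NF p lam v' * KF p lam z' := by
  have hq2c : Central ((gcomm (g p lam 1) (g p lam 2))⁻¹) := (cent2 p lam).inv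
  have hq3c : Central ((gcomm (g p lam 1) (g p lam 3))⁻¹) := (cent3 p lam).inv
  have cent0' : Central (gcomm (g p lam 0) (g p lam 2)) := cent0 p lam
  have cent1' : Central (gcomm (g p lam 0) (g p lam 3)) := cent1 p lam
  have hBp' : (g p lam 1) ^ p
      = gcomm (g p lam 0) (g p lam 2) ^ lam.1 * gcomm (g p lam 0) (g p lam 3) ^ lam.2 :=
    hBp p lam
  have centT : Central (gcomm (g p lam 0) (g p lam 2) ^ lam.1
      * gcomm (g p lam 0) (g p lam 3) ^ lam.2) := (cent0'.pow lam.1).mul (cent1'.pow lam.2)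
  refine ⟨v + εV p 1,
    z + ((lam.1 * carry (v 1) 1 : ℕ) : ZMod p) • εV p 0
      + ((lam.2 * carry (v 1) 1 : ℕ) : ZMod p) • εV p 1
      + (((p-1) * (v 2).val : ℕ) : ZMod p) • εV p 2
      + (((p-1) * (v 3).val : ℕ) : ZMod p) • εV p 3, ?_⟩
  rw [KF_add, KF_add, KF_add, KF_add, KF_t0, KF_t1, KF_q2, KF_q3, NF_add_e1]
  rw [NF_apply]
  rw [mul_assoc (_ * _) (KF p lam z) (g p lam 1), KF_central p lam z (g p lam 1),
    ← mul_assoc]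
  simp only [mul_assoc]
  rw [swap_pow_tail hq3c (mul_swap (g p lam 1) (g p lam 3)) (v 3).val (KF p lam z)]
  rw [swap_pow_tail hq2c (mul_swap (g p lam 1) (g p lam 2)) (v 2).val _]
  rw [← mul_assoc (g p lam 1 ^ (v 1).val) (g p lam 1) _, ← pow_succ]
  rw [gen_pow_collect p lam hBp' (v 1)]
  simp only [mul_assoc]
  rw [cmove (hq2c.pow (v 2).val) (g p lam 3 ^ (v 3).val)]
  rw [cmove (centT.pow (carry (v 1) 1)) (g p lam 2 ^ (v 2).val)]
  rw [cmove (centT.pow (carry (v 1) 1)) (g p lam 3 ^ (v 3).val)]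
  rw [Commute.mul_pow ((cent0'.pow lam.1) (gcomm (g p lam 0) (g p lam 3) ^ lam.2))
    (carry (v 1) 1), ← pow_mul, ← pow_mul]
  all_goals rw [KF_central p lam z]
  all_goals simp only [mul_assoc]

lemma step2 (v z : Fin 4 → ZMod p) : ∃ v' z',
    NF p lam v * KF p lam z * g p lam 2 = NF p lam v' * KF p lam z' := by
  have cent2' : Central (gcomm (g p lam 1) (g p lam 2)) := cent2 p lam
  have cent3' : Central (gcomm (g p lam 1) (g p lam 3)) := cent3 p lam
  have hCD : Commute (g p lam 2) (g p lam 3) := gcomm_eq_one_iff.mp (jrel6 p lam)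
  have hCp' : (g p lam 2) ^ p
      = gcomm (g p lam 1) (g p lam 2) * gcomm (g p lam 1) (g p lam 3) := hCp p lam
  have centT : Central (gcomm (g p lam 1) (g p lam 2) * gcomm (g p lam 1) (g p lam 3)) :=
    cent2'.mul cent3'
  refine ⟨v + εV p 2,
    z + ((carry (v 2) 1 : ℕ) : ZMod p) • εV p 2
      + ((carry (v 2) 1 : ℕ) : ZMod p) • εV p 3, ?_⟩
  rw [KF_add, KF_add, KF_t2, KF_t3, NF_add_e2]
  rw [NF_apply]
  rw [mul_assoc (_ * _) (KF p lam z) (g p lam 2), KF_central p lam z (g p lam 2),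
    ← mul_assoc]
  simp only [mul_assoc]
  rw [comm_tail ((hCD.pow_right (v 3).val).symm) (KF p lam z)]
  rw [← mul_assoc (g p lam 2 ^ (v 2).val) (g p lam 2) _, ← pow_succ]
  rw [gen_pow_collect p lam hCp' (v 2)]
  simp only [mul_assoc]
  rw [cmove (centT.pow (carry (v 2) 1)) (g p lam 3 ^ (v 3).val)]
  rw [Commute.mul_pow (cent2' (gcomm (g p lam 1) (g p lam 3))) (carry (v 2) 1)]
  all_goals rw [KF_central p lam z]
  all_goals simp only [mul_assoc]

lemma step3 (v z : Fin 4 → ZMod p) : ∃ v' z',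
    NF p lam v * KF p lam z * g p lam 3 = NF p lam v' * KF p lam z' := by
  have hCp3' : (g p lam 3) ^ p = gcomm (g p lam 1) (g p lam 3) := jrel4 p lam
  refine ⟨v + εV p 3, z + ((carry (v 3) 1 : ℕ) : ZMod p) • εV p 3, ?_⟩
  rw [KF_add, KF_t3, NF_add_e3]
  rw [NF_apply]
  rw [mul_assoc (_ * _) (KF p lam z) (g p lam 3), KF_central p lam z (g p lam 3),
    ← mul_assoc]
  simp only [mul_assoc]
  rw [← mul_assoc (g p lam 3 ^ (v 3).val) (g p lam 3) _, ← pow_succ]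
  rw [gen_pow_collect p lam hCp3' (v 3)]
  all_goals rw [KF_central p lam z]
  all_goals simp only [mul_assoc]

lemma step (v z : Fin 4 → ZMod p) (i : Fin 4) : ∃ v' z',
    NF p lam v * KF p lam z * g p lam i = NF p lam v' * KF p lam z' := by
  fin_cases i
  · exact step0 p lam v z
  · exact step1 p lam v z
  · exact step2 p lam v z
  · exact step3 p lam v z

lemma g_pow_sq (i : Fin 4) : (g p lam i) ^ (p * p) = 1 := by
  rw [pow_mul]
  fin_cases i
  · show (g p lam 0 ^ p) ^ p = 1
    rw [jrel1]
    exact c0_pow_p p lam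
  · show (g p lam 1 ^ p) ^ p = 1
    rw [hBp p lam,
      Commute.mul_pow (((cent0 p lam).pow lam.1) ((c1 p lam) ^ lam.2)),
      pow_right_comm, c0_pow_p, one_pow, pow_right_comm, c1_pow_p, one_pow, one_mul]
  · show (g p lam 2 ^ p) ^ p = 1
    rw [hCp p lam, Commute.mul_pow ((cent2 p lam) (c3 p lam)), c2_pow_p, c3_pow_p, one_mul]
  · show (g p lam 3 ^ p) ^ p = 1
    rw [jrel4]
    exact c3_pow_p p lam

lemma NFKF_surj (x : JKGroup p lam) : ∃ v z, x = NF p lam v * KF p lam z := by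
  have hx : x ∈ Subgroup.closure (Set.range (PresentedGroup.of : Fin 4 → JKGroup p lam)) := by
    rw [PresentedGroup.closure_range_of]; trivial
  have hstepn : ∀ (i : Fin 4) (n : ℕ) (y : JKGroup p lam),
      (∃ v z, y = NF p lam v * KF p lam z)
      → ∃ v z, y * (g p lam i) ^ n = NF p lam v * KF p lam z := by
    intro i n
    induction n with
    | zero => intro y hy; simpa using hy
    | succ n ih =>
      intro y hy
      obtain ⟨v, z, hvz⟩ := ih y hy
      obtain ⟨v', z', h'⟩ := step p lam v z i
      exact ⟨v', z', by rw [pow_succ, ← mul_assoc, hvz, h']⟩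
  refine Subgroup.closure_induction_right ?_ ?_ ?_ hx
  · refine ⟨0, 0, ?_⟩
    show (1 : JKGroup p lam) = _
    simp [NF, KF, ZMod.val_zero]
  · rintro x _ y ⟨i, rfl⟩ ⟨v, z, rfl⟩
    obtain ⟨v', z', h'⟩ := step p lam v z i
    exact ⟨v', z', h'⟩
  · rintro x _ y ⟨i, rfl⟩ hx'
    have h1 : (PresentedGroup.of i : JKGroup p lam)⁻¹ = (g p lam i) ^ (p * p - 1) :=
      inv_eq_pow_pred (Nat.mul_pos (hp0 p) (hp0 p)) (g_pow_sq p lam i)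
    rw [h1]
    exact hstepn i (p*p-1) x hx'

lemma finiteJK : Finite (JKGroup p lam) := by
  have hsurj : Function.Surjective (fun vz : (Fin 4 → ZMod p) × (Fin 4 → ZMod p)
      => NF p lam vz.1 * KF p lam vz.2) := by
    intro x
    obtain ⟨v, z, h⟩ := NFKF_surj p lam x
    exact ⟨(v, z), h.symm⟩
  exact Finite.of_surjective _ hsurj

def φJK : JKGroup p lam →* M p lam := PresentedGroup.toGroup (relsM (p := p) (lam := lam))

lemma φ_of (i : Fin 4) : φJK p lam (g p lam i) = gen p lam i :=
  PresentedGroup.toGroup.of _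

lemma FV_eq_bilV_of_disj (u w : Fin 4 → ZMod p) (h : ∀ k, u k = 0 ∨ w k = 0) :
    FV p lam u w = bilV u w := by
  unfold FV
  have hz : (∑ i : Fin 4, carry (u i) (w i) • tV p lam i) = 0 := by
    apply Finset.sum_eq_zero
    intro i _
    rcases h i with h' | h'
    · rw [h', carry_zero_left, zero_smul]
    · rw [h', carry_zero_right, zero_smul]
  rw [hz, add_zero]

lemma smul_εV_off {i k : Fin 4} (n : ℕ) (h : k ≠ i) : (n • εV p i) k = 0 := by
  rw [Pi.smul_apply, εV_off h, smul_zero]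

lemma NFM (v : Fin 4 → ZMod p) :
    (⟨(v 0).val • εV p 0, 0⟩ : M p lam) * ⟨(v 1).val • εV p 1, 0⟩
      * ⟨(v 2).val • εV p 2, 0⟩ * ⟨(v 3).val • εV p 3, 0⟩ = ⟨v, bilV v v⟩ := by
  simp only [M.mul_def']
  have hd1 : ∀ k, ((v 0).val • εV p 0) k = 0 ∨ ((v 1).val • εV p 1) k = 0 := by
    intro k
    fin_cases k
    · exact Or.inr (by rw [Pi.smul_apply, εV_off (by decide), smul_zero])
    · exact Or.inl (by rw [Pi.smul_apply, εV_off (by decide), smul_zero])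
    · exact Or.inl (by rw [Pi.smul_apply, εV_off (by decide), smul_zero])
    · exact Or.inl (by rw [Pi.smul_apply, εV_off (by decide), smul_zero])
  have hd2 : ∀ k, ((v 0).val • εV p 0 + (v 1).val • εV p 1) k = 0
      ∨ ((v 2).val • εV p 2) k = 0 := by
    intro k
    fin_cases k
    · exact Or.inr (by rw [Pi.smul_apply, εV_off (by decide), smul_zero])
    · exact Or.inr (by rw [Pi.smul_apply, εV_off (by decide), smul_zero])
    · exact Or.inl (by rw [Pi.add_apply, Pi.smul_apply, Pi.smul_apply,
        εV_off (by decide), εV_off (by decide), smul_zero, smul_zero, add_zero])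
    · exact Or.inr (by rw [Pi.smul_apply, εV_off (by decide), smul_zero])
  have hd3 : ∀ k, ((v 0).val • εV p 0 + (v 1).val • εV p 1 + (v 2).val • εV p 2) k = 0
      ∨ ((v 3).val • εV p 3) k = 0 := by
    intro k
    fin_cases k
    · exact Or.inr (by rw [Pi.smul_apply, εV_off (by decide), smul_zero])
    · exact Or.inr (by rw [Pi.smul_apply, εV_off (by decide), smul_zero])
    · exact Or.inr (by rw [Pi.smul_apply, εV_off (by decide), smul_zero])
    · exact Or.inl (by rw [Pi.add_apply, Pi.add_apply, Pi.smul_apply, Pi.smul_apply,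
        Pi.smul_apply, εV_off (by decide), εV_off (by decide), εV_off (by decide),
        smul_zero, smul_zero, smul_zero, add_zero, add_zero])
  rw [FV_eq_bilV_of_disj p lam _ _ hd1, FV_eq_bilV_of_disj p lam _ _ hd2, FV_eq_bilV_of_disj p lam _ _ hd3]
  have hs : ∀ (x : ZMod p), x.val • (1 : ZMod p) = x := fun x => by
    rw [nsmul_eq_mul, mul_one, ZMod.natCast_zmod_val]
  ext j
  · show ((v 0).val • εV p 0 + (v 1).val • εV p 1 + (v 2).val • εV p 2
        + (v 3).val • εV p 3) j = v j
    fin_cases j <;>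
      simp [εV, Pi.smul_apply, hs, -ZMod.natCast_val, Pi.natCast_apply, ZMod.natCast_zmod_val]
  · fin_cases j <;>
      simp [bilV, εV, Pi.smul_apply, hs, -ZMod.natCast_val, Pi.natCast_apply, ZMod.natCast_zmod_val, Matrix.vecHead, Matrix.vecTail] <;>
      ring

lemma phiNF (v : Fin 4 → ZMod p) : φJK p lam (NF p lam v) = ⟨v, bilV v v⟩ := by
  rw [NF, map_mul, map_mul, map_mul, map_pow, map_pow, map_pow, map_pow,
    φ_of, φ_of, φ_of, φ_of,
    gen_pow_lt 0 _ (ZMod.val_lt (v 0)), gen_pow_lt 1 _ (ZMod.val_lt (v 1)),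
    gen_pow_lt 2 _ (ZMod.val_lt (v 2)), gen_pow_lt 3 _ (ZMod.val_lt (v 3))]
  exact NFM p lam v

lemma phi_uu (i j : Fin 4) : φJK p lam (gcomm (g p lam i) (g p lam j))
    = ⟨0, bilV (εV p i) (εV p j) - bilV (εV p j) (εV p i)⟩ := by
  rw [map_gcomm, φ_of, φ_of, M.gcomm_eq]
  rfl

lemma phiKF (z : Fin 4 → ZMod p) : φJK p lam (KF p lam z) = ⟨0, z⟩ := by
  have coe0 : ((uu p lam 0 : JKGroup p lam)) = gcomm (g p lam 0) (g p lam 2) := rfl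
  have coe1 : ((uu p lam 1 : JKGroup p lam)) = gcomm (g p lam 0) (g p lam 3) := rfl
  have coe2 : ((uu p lam 2 : JKGroup p lam)) = gcomm (g p lam 1) (g p lam 2) := rfl
  have coe3 : ((uu p lam 3 : JKGroup p lam)) = gcomm (g p lam 1) (g p lam 3) := rfl
  rw [KF]
  simp only [Subgroup.coe_mul, SubmonoidClass.coe_pow, map_mul, map_pow,
    coe0, coe1, coe2, coe3, phi_uu]
  rw [M.cz_pow, M.cz_pow, M.cz_pow, M.cz_pow, M.cz_mul, M.cz_mul, M.cz_mul]
  have hs : ∀ (x : ZMod p), x.val • (1 : ZMod p) = x := fun x => by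
    rw [nsmul_eq_mul, mul_one, ZMod.natCast_zmod_val]
  congr 1
  funext j
  fin_cases j <;>
    simp [bilV, εV, Pi.smul_apply, hs, -ZMod.natCast_val, Pi.natCast_apply, ZMod.natCast_zmod_val, Matrix.vecHead, Matrix.vecTail] <;>
    ring

lemma phi_NFKF (v z : Fin 4 → ZMod p) :
    φJK p lam (NF p lam v * KF p lam z) = ⟨v, bilV v v + z⟩ := by
  rw [map_mul, phiNF, phiKF, M.mul_def', FV_zero_right]
  ext j
  · show (v + 0) j = v j
    simp
  · show (bilV v v + z + (0 : Fin 4 → ZMod p)) j = (bilV v v + z) j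
    simp

lemma phi_bij : Function.Bijective (φJK p lam) := by
  constructor
  · intro x y h
    obtain ⟨v, z, rfl⟩ := NFKF_surj p lam x
    obtain ⟨v', z', rfl⟩ := NFKF_surj p lam y
    rw [phi_NFKF, phi_NFKF] at h
    have ha : v = v' := congrArg M.a h
    subst ha
    have hz : bilV v v + z = bilV v v + z' := congrArg M.z h
    have hz' : z = z' := by
      have := congrArg (fun w => w - bilV v v) hz
      simpa using this
    rw [hz']
  · intro m
    refine ⟨NF p lam m.a * KF p lam (m.z - bilV m.a m.a), ?_⟩
    rw [phi_NFKF]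
    ext j
    · rfl
    · show (bilV m.a m.a + (m.z - bilV m.a m.a)) j = m.z j
      simp

noncomputable def eIso : JKGroup p lam ≃* M p lam :=
  MulEquiv.ofBijective (φJK p lam) (phi_bij p lam)

lemma center_comap : Subgroup.center (JKGroup p lam)
    = Subgroup.comap (eIso p lam).toMonoidHom (Subgroup.center (M p lam)) := by
  ext x
  simp only [Subgroup.mem_comap]
  rw [Subgroup.mem_center_iff, Subgroup.mem_center_iff]
  constructor
  · intro h m
    obtain ⟨y, rfl⟩ := (eIso p lam).surjective m
    show (eIso p lam) y * (eIso p lam) x = (eIso p lam) x * (eIso p lam) y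
    rw [← map_mul, ← map_mul, h y]
  · intro h y
    apply (eIso p lam).injective
    rw [map_mul, map_mul]
    exact h _

lemma center_eq_commutator :
    Subgroup.center (JKGroup p lam) = commutator (JKGroup p lam) := by
  have hmap : Subgroup.map (eIso p lam).toMonoidHom (commutator (JKGroup p lam))
      = commutator (M p lam) := by
    rw [commutator_def, Subgroup.map_commutator, commutator_def,
      Subgroup.map_top_of_surjective (eIso p lam).toMonoidHom (eIso p lam).surjective]
  rw [center_comap, ← M.commutator_eq_center, ← hmap,
    Subgroup.comap_map_eq_self_of_injective (f := (eIso p lam).toMonoidHom)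
      (eIso p lam).injective]

lemma card_JK : Nat.card (JKGroup p lam) = p ^ 8 := by
  rw [Nat.card_congr (eIso p lam).toEquiv]
  exact M.card

lemma card_center_JK : Nat.card (Subgroup.center (JKGroup p lam)) = p ^ 4 := by
  have hEquiv : Subgroup.center (JKGroup p lam) ≃ Subgroup.center (M p lam) := by
    refine Equiv.subtypeEquiv (eIso p lam).toEquiv (fun a => ?_)
    rw [center_comap]
    rfl
  rw [Nat.card_congr hEquiv]
  exact M.card_center

lemma center_pow_p_JK (z : JKGroup p lam) (hz : z ∈ Subgroup.center (JKGroup p lam)) :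
    z ^ p = 1 := by
  rw [center_comap] at hz
  apply (eIso p lam).injective
  rw [map_pow, map_one]
  exact M.center_pow_p _ hz

lemma pow_p_center_JK (x : JKGroup p lam) :
    x ^ p ∈ Subgroup.center (JKGroup p lam) := by
  rw [center_comap, Subgroup.mem_comap]
  show ((eIso p lam) (x ^ p)) ∈ _
  rw [map_pow]
  exact M.pow_p_center _

lemma card_quot_JK :
    Nat.card (JKGroup p lam ⧸ Subgroup.center (JKGroup p lam)) = p ^ 4 := by
  haveI := finiteJK p lam
  have h := Subgroup.card_eq_card_quotient_mul_card_subgroup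
    (Subgroup.center (JKGroup p lam))
  rw [card_JK, card_center_JK] at h
  have hp4 : (p : ℕ) ^ 4 ≠ 0 := pow_ne_zero _ (Nat.pos_of_ne_zero (NeZero.ne p)).ne'
  have h8 : p ^ 8 = p ^ 4 * p ^ 4 := by ring
  exact mul_right_cancel₀ hp4 (h.symm.trans h8)

lemma quot_comm_JK (x y : JKGroup p lam ⧸ Subgroup.center (JKGroup p lam)) :
    x * y = y * x := by
  induction x using QuotientGroup.induction_on with | _ a =>
  induction y using QuotientGroup.induction_on with | _ b =>
  rw [← QuotientGroup.mk_mul, ← QuotientGroup.mk_mul, QuotientGroup.eq]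
  have hval : (a * b)⁻¹ * (b * a) = ⁅b⁻¹, a⁻¹⁆ := by
    rw [commutatorElement_def]; group
  rw [hval, center_eq_commutator, commutator_def]
  exact Subgroup.commutator_mem_commutator (Subgroup.mem_top _) (Subgroup.mem_top _)

lemma quot_pow_JK (x : JKGroup p lam ⧸ Subgroup.center (JKGroup p lam)) :
    x ^ p = 1 := by
  induction x using QuotientGroup.induction_on with | _ a =>
  rw [← QuotientGroup.mk_pow, QuotientGroup.eq_one_iff]
  exact pow_p_center_JK p lam a

end withinst

end JK

end JKP

theorem stmt_2 (p : ℕ) (hp : p.Prime) (lam : ℕ × ℕ)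
    (hlam : lam = (1, 0) ∨ (lam.1 ≤ p - 1 ∧ lam.2 = 1)) :
    Nat.card (JKGroup p lam) = p ^ 8 ∧
    Subgroup.center (JKGroup p lam) = commutator (JKGroup p lam) ∧
    Nat.card (Subgroup.center (JKGroup p lam)) = p ^ 4 ∧
    (∀ z ∈ Subgroup.center (JKGroup p lam), z ^ p = 1) ∧
    (∀ g : JKGroup p lam, g ^ p ∈ Subgroup.center (JKGroup p lam)) ∧
    Nat.card (JKGroup p lam ⧸ Subgroup.center (JKGroup p lam)) = p ^ 4 ∧
    (∀ x y : JKGroup p lam ⧸ Subgroup.center (JKGroup p lam), x * y = y * x) ∧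
    (∀ x : JKGroup p lam ⧸ Subgroup.center (JKGroup p lam), x ^ p = 1) := by
  haveI : NeZero p := ⟨hp.pos.ne'⟩
  haveI : Fact (1 < p) := ⟨hp.one_lt⟩
  exact ⟨JKP.card_JK p lam, JKP.center_eq_commutator p lam, JKP.card_center_JK p lam,
    JKP.center_pow_p_JK p lam, JKP.pow_p_center_JK p lam, JKP.card_quot_JK p lam,
    JKP.quot_comm_JK p lam, JKP.quot_pow_JK p lam⟩
end

section
/- Let p be an odd prime and λ = (λ₁, λ₂) ∈ {(1,0)} ∪ {(i,1) : 0 ≤ i ≤ p−1}. Then for all integers k₁, k₂, l₁, l₂, the following identity holds in G_λ^(p): (a₁^{k₁} a₂^{k₂} b₁^{l₁} b₂^{l₂})^p = [a₁,b₁]^{k₁+λ₁·k₂} · [a₁,b₂]^{λ₂·k₂} · [a₂,b₁]^{l₁} · [a₂,b₂]^{l₁+l₂}. -/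
section GC
variable {G : Type*} [Group G]

lemma gc_mul (x y : G) : x * y = y * x * gcomm x y := by simp [gcomm]; group

lemma gc_swap (x y : G) : gcomm y x = (gcomm x y)⁻¹ := by simp [gcomm]; group

lemma gc_eq_one_of_central (x z : G) (h : ∀ g, Commute z g) : gcomm x z = 1 := by
  have h1 : z⁻¹ * x = x * z⁻¹ := ((h x).inv_left).eq
  calc gcomm x z = x⁻¹ * (z⁻¹ * x) * z := by simp [gcomm]; group
    _ = x⁻¹ * (x * z⁻¹) * z := by rw [h1]
    _ = 1 := by group

lemma gc_zpow_right (x y : G) (h : ∀ g, Commute (gcomm x y) g) (n : ℤ) :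
    gcomm x (y ^ n) = gcomm x y ^ n := by
  have hc : Commute y (gcomm y x) := by
    rw [gc_swap]; exact ((h y).symm).inv_right
  have key : x⁻¹ * y ^ n * x = y ^ n * gcomm y x ^ n := by
    have h1 : x⁻¹ * y ^ n * x = (x⁻¹ * y * x) ^ n := by
      have := map_zpow (MulAut.conj x⁻¹) y n
      simpa [MulAut.conj_apply, mul_assoc] using this
    rw [h1]
    have h2 : x⁻¹ * y * x = y * gcomm y x := by simp [gcomm]; group
    rw [h2, hc.mul_zpow]
  calc gcomm x (y ^ n) = (x⁻¹ * y ^ n * x)⁻¹ * x⁻¹ * x * y ^ n := by simp [gcomm]; group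
    _ = (y ^ n * gcomm y x ^ n)⁻¹ * x⁻¹ * x * y ^ n := by rw [key]
    _ = (gcomm y x ^ n)⁻¹ * (y ^ n)⁻¹ * y ^ n := by group
    _ = (gcomm y x)⁻¹ ^ n := by group
    _ = gcomm x y ^ n := by rw [← gc_swap]

lemma gc_zpow_left (x y : G) (h : ∀ g, Commute (gcomm x y) g) (n : ℤ) :
    gcomm (x ^ n) y = gcomm x y ^ n := by
  have h' : ∀ g, Commute (gcomm y x) g := by
    intro g; rw [gc_swap]; exact (h g).inv_left
  rw [gc_swap, gc_zpow_right y x h' n, gc_swap x y]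
  group

lemma gc_mul_right (x u v : G) (h : ∀ g, Commute (gcomm x u) g) :
    gcomm x (u * v) = gcomm x u * gcomm x v := by
  have h1 : u⁻¹ * x * u = x * gcomm x u := by simp [gcomm]; group
  calc gcomm x (u * v) = x⁻¹ * v⁻¹ * (u⁻¹ * x * u) * v := by simp [gcomm]; group
    _ = x⁻¹ * v⁻¹ * (x * gcomm x u) * v := by rw [h1]
    _ = x⁻¹ * v⁻¹ * x * (gcomm x u * v) := by group
    _ = x⁻¹ * v⁻¹ * x * (v * gcomm x u) := by rw [(h v).eq]
    _ = gcomm x v * gcomm x u := by simp [gcomm]; group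
    _ = gcomm x u * gcomm x v := ((h (gcomm x v)).eq).symm

lemma gc_mul_left (u v y : G) (h : ∀ g, Commute (gcomm y u) g)
    (h' : ∀ g, Commute (gcomm v y) g) :
    gcomm (u * v) y = gcomm u y * gcomm v y := by
  rw [gc_swap, gc_mul_right y u v h, mul_inv_rev, ← gc_swap, ← gc_swap]
  exact ((h' (gcomm u y)).eq)

lemma mul_pow_of_central (x y : G) (h : ∀ g, Commute (gcomm y x) g) (n : ℕ) :
    (x * y) ^ n = x ^ n * y ^ n * gcomm y x ^ (n.choose 2) := by
  induction n with
  | zero => simp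
  | succ n ih =>
    have hyx : y ^ n * x = x * y ^ n * gcomm y x ^ n := by
      have h1 : gcomm (y ^ (n : ℤ)) x = gcomm y x ^ (n : ℤ) := gc_zpow_left y x h n
      rw [zpow_natCast, zpow_natCast] at h1
      rw [gc_mul (y ^ n) x, h1]
    have hmove : ∀ (m : ℕ) (g : G), gcomm y x ^ m * g = g * gcomm y x ^ m :=
      fun m g => ((h g).pow_left m).eq
    have hch : (n + 1).choose 2 = n.choose 2 + n := by
      rw [Nat.choose_succ_succ]
      simp [Nat.choose_one_right, Nat.add_comm]
    calc (x * y) ^ (n + 1) = (x ^ n * y ^ n * gcomm y x ^ n.choose 2) * (x * y) := by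
          rw [pow_succ, ih]
      _ = x ^ n * (y ^ n * x) * (gcomm y x ^ n.choose 2 * y) := by
          rw [mul_assoc (x ^ n * y ^ n), ← mul_assoc (gcomm y x ^ n.choose 2) x y,
            hmove (n.choose 2) x]; group
      _ = x ^ n * (x * y ^ n * gcomm y x ^ n) * (y * gcomm y x ^ n.choose 2) := by
          rw [hyx, hmove]
      _ = x ^ (n + 1) * y ^ n * (gcomm y x ^ n * y) * gcomm y x ^ n.choose 2 := by
          rw [pow_succ]; group
      _ = x ^ (n + 1) * y ^ (n + 1) * gcomm y x ^ ((n + 1).choose 2) := by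
          rw [hmove n y, hch, pow_add]; group

end GC

section GC2
variable {G : Type*} [Group G]

lemma commute_of_gc_eq_one {x y : G} (h : gcomm x y = 1) : Commute x y := by
  have h2 := gc_mul x y
  rw [h, mul_one] at h2
  exact h2

lemma gc_left_eq_one_of_central (z y : G) (h : ∀ g, Commute z g) : gcomm z y = 1 := by
  rw [gc_swap, gc_eq_one_of_central y z h, inv_one]

lemma gc_zpow_zpow (u v : G) (hc : ∀ g, Commute (gcomm u v) g) (m n : ℤ) :
    gcomm (u ^ m) (v ^ n) = gcomm u v ^ (m * n) := by
  have h1 : gcomm (u ^ m) v = gcomm u v ^ m := gc_zpow_left u v hc m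
  have h2 : ∀ g, Commute (gcomm (u ^ m) v) g := fun g => h1 ▸ (hc g).zpow_left m
  rw [gc_zpow_right (u ^ m) v h2 n, h1, ← zpow_mul]

lemma central_swap (x y : G) (h : ∀ g, Commute (gcomm x y) g) :
    ∀ g, Commute (gcomm y x) g := fun g => by rw [gc_swap]; exact (h g).inv_left

lemma zpow_pow_comm (x : G) (k : ℤ) (n : ℕ) : (x ^ k) ^ n = (x ^ n) ^ k := by
  rw [← zpow_natCast (x ^ k), ← zpow_mul, mul_comm, zpow_mul, zpow_natCast]

end GC2

section JK
variable (p : ℕ) (lam : ℕ × ℕ)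

lemma jk_rel_one : ∀ r ∈ jkRels p lam, PresentedGroup.mk (jkRels p lam) r = 1 := by
  intro r hr
  exact (QuotientGroup.eq_one_iff _).2 (Subgroup.subset_normalClosure hr)

lemma jk_mk_gc (x y : FreeGroup (Fin 4)) :
    PresentedGroup.mk (jkRels p lam) (gcomm x y) =
      gcomm (PresentedGroup.mk (jkRels p lam) x) (PresentedGroup.mk (jkRels p lam) y) := by
  simp [gcomm, map_mul, map_inv]

lemma jk_central (z : JKGroup p lam)
    (h : ∀ i : Fin 4, Commute z (PresentedGroup.of i)) : ∀ g, Commute z g := by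
  intro g
  have hg : g ∈ Subgroup.centralizer {z} := by
    refine PresentedGroup.generated_by (jkRels p lam) _ (fun j => ?_) g
    exact Subgroup.mem_centralizer_iff.2 (by rintro s rfl; exact (h j).eq)
  have := Subgroup.mem_centralizer_iff.1 hg z rfl
  exact this

lemma jk_gc_central (i j : Fin 4) :
    ∀ g, Commute (gcomm (PresentedGroup.of (rels := jkRels p lam) i) (PresentedGroup.of j)) g := by
  apply jk_central
  intro k
  apply commute_of_gc_eq_one
  have h := jk_rel_one p lam _ (Set.mem_union_left _ ⟨i, j, k, rfl⟩)
  rw [jk_mk_gc, jk_mk_gc] at h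
  exact h

end JK

section KEY
variable {G : Type*} [Group G]

lemma key_calc (p : ℕ) (hpd : p ∣ p.choose 2) (lam₁ lam₂ : ℕ)
    (a1 a2 b1 b2 : G)
    (hc13 : ∀ g, Commute (gcomm a1 b1) g)
    (hc14 : ∀ g, Commute (gcomm a1 b2) g)
    (hc23 : ∀ g, Commute (gcomm a2 b1) g)
    (hc24 : ∀ g, Commute (gcomm a2 b2) g)
    (r1 : a1 ^ p = gcomm a1 b1)
    (r2 : a2 ^ p = gcomm a1 (b1 ^ lam₁ * b2 ^ lam₂))
    (r3 : b1 ^ p = gcomm a2 (b1 * b2))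
    (r4 : b2 ^ p = gcomm a2 b2)
    (r5 : gcomm a1 a2 = 1)
    (r6 : gcomm b1 b2 = 1)
    (k₁ k₂ l₁ l₂ : ℤ) :
    (a1 ^ k₁ * a2 ^ k₂ * b1 ^ l₁ * b2 ^ l₂) ^ p =
      gcomm a1 b1 ^ (k₁ + (lam₁ : ℤ) * k₂) * gcomm a1 b2 ^ ((lam₂ : ℤ) * k₂) *
      gcomm a2 b1 ^ l₁ * gcomm a2 b2 ^ (l₁ + l₂) := by
  -- expanded relation 2
  have e1 : gcomm a1 (b1 ^ lam₁) = gcomm a1 b1 ^ lam₁ := by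
    have h := gc_zpow_right a1 b1 hc13 (lam₁ : ℤ)
    rw [zpow_natCast, zpow_natCast] at h; exact h
  have e2 : gcomm a1 (b2 ^ lam₂) = gcomm a1 b2 ^ lam₂ := by
    have h := gc_zpow_right a1 b2 hc14 (lam₂ : ℤ)
    rw [zpow_natCast, zpow_natCast] at h; exact h
  have he1c : ∀ g, Commute (gcomm a1 (b1 ^ lam₁)) g :=
    fun g => e1 ▸ (hc13 g).pow_left _
  have r2' : a2 ^ p = gcomm a1 b1 ^ lam₁ * gcomm a1 b2 ^ lam₂ := by
    rw [r2, gc_mul_right a1 _ _ he1c, e1, e2]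
  have r3' : b1 ^ p = gcomm a2 b1 * gcomm a2 b2 := by
    rw [r3, gc_mul_right a2 _ _ hc23]
  -- centrality of p-th powers of generators
  have ha1p : ∀ g, Commute (a1 ^ p) g := fun g => r1 ▸ hc13 g
  have ha2p : ∀ g, Commute (a2 ^ p) g := fun g =>
    r2' ▸ ((hc13 g).pow_left _).mul_left ((hc14 g).pow_left _)
  -- commutators are p-torsion
  have hz13p : gcomm a1 b1 ^ p = 1 := by
    have h := gc_zpow_left a1 b1 hc13 (p : ℤ)
    rw [zpow_natCast, zpow_natCast] at h
    rw [← h]; exact gc_left_eq_one_of_central _ _ ha1p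
  have hz14p : gcomm a1 b2 ^ p = 1 := by
    have h := gc_zpow_left a1 b2 hc14 (p : ℤ)
    rw [zpow_natCast, zpow_natCast] at h
    rw [← h]; exact gc_left_eq_one_of_central _ _ ha1p
  have hz23p : gcomm a2 b1 ^ p = 1 := by
    have h := gc_zpow_left a2 b1 hc23 (p : ℤ)
    rw [zpow_natCast, zpow_natCast] at h
    rw [← h]; exact gc_left_eq_one_of_central _ _ ha2p
  have hz24p : gcomm a2 b2 ^ p = 1 := by
    have h := gc_zpow_left a2 b2 hc24 (p : ℤ)
    rw [zpow_natCast, zpow_natCast] at h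
    rw [← h]; exact gc_left_eq_one_of_central _ _ ha2p
  -- the commutator of the b-block with the a-block
  have g11 : gcomm (b1 ^ l₁) (a1 ^ k₁) = gcomm b1 a1 ^ (l₁ * k₁) :=
    gc_zpow_zpow b1 a1 (central_swap a1 b1 hc13) l₁ k₁
  have g12 : gcomm (b2 ^ l₂) (a1 ^ k₁) = gcomm b2 a1 ^ (l₂ * k₁) :=
    gc_zpow_zpow b2 a1 (central_swap a1 b2 hc14) l₂ k₁
  have g21 : gcomm (b1 ^ l₁) (a2 ^ k₂) = gcomm b1 a2 ^ (l₁ * k₂) :=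
    gc_zpow_zpow b1 a2 (central_swap a2 b1 hc23) l₁ k₂
  have g22 : gcomm (b2 ^ l₂) (a2 ^ k₂) = gcomm b2 a2 ^ (l₂ * k₂) :=
    gc_zpow_zpow b2 a2 (central_swap a2 b2 hc24) l₂ k₂
  have hg11 : ∀ g, Commute (gcomm (b1 ^ l₁) (a1 ^ k₁)) g :=
    fun g => g11 ▸ ((central_swap a1 b1 hc13) g).zpow_left _
  have hg12 : ∀ g, Commute (gcomm (b2 ^ l₂) (a1 ^ k₁)) g :=
    fun g => g12 ▸ ((central_swap a1 b2 hc14) g).zpow_left _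
  have hg21 : ∀ g, Commute (gcomm (b1 ^ l₁) (a2 ^ k₂)) g :=
    fun g => g21 ▸ ((central_swap a2 b1 hc23) g).zpow_left _
  have hg22 : ∀ g, Commute (gcomm (b2 ^ l₂) (a2 ^ k₂)) g :=
    fun g => g22 ▸ ((central_swap a2 b2 hc24) g).zpow_left _
  have hBa1 : gcomm (b1 ^ l₁ * b2 ^ l₂) (a1 ^ k₁) =
      gcomm (b1 ^ l₁) (a1 ^ k₁) * gcomm (b2 ^ l₂) (a1 ^ k₁) :=
    gc_mul_left _ _ _ (central_swap _ _ hg11) hg12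
  have hBa2 : gcomm (b1 ^ l₁ * b2 ^ l₂) (a2 ^ k₂) =
      gcomm (b1 ^ l₁) (a2 ^ k₂) * gcomm (b2 ^ l₂) (a2 ^ k₂) :=
    gc_mul_left _ _ _ (central_swap _ _ hg21) hg22
  have hBa1c : ∀ g, Commute (gcomm (b1 ^ l₁ * b2 ^ l₂) (a1 ^ k₁)) g :=
    fun g => hBa1 ▸ (hg11 g).mul_left (hg12 g)
  have hBA : gcomm (b1 ^ l₁ * b2 ^ l₂) (a1 ^ k₁ * a2 ^ k₂) =
      gcomm b1 a1 ^ (l₁ * k₁) * gcomm b2 a1 ^ (l₂ * k₁) *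
        (gcomm b1 a2 ^ (l₁ * k₂) * gcomm b2 a2 ^ (l₂ * k₂)) := by
    rw [gc_mul_right _ _ _ hBa1c, hBa1, hBa2, g11, g12, g21, g22, mul_assoc]
  have hBAc : ∀ g, Commute (gcomm (b1 ^ l₁ * b2 ^ l₂) (a1 ^ k₁ * a2 ^ k₂)) g :=
    fun g => hBA ▸
      ((((central_swap a1 b1 hc13) g).zpow_left _).mul_left
        (((central_swap a1 b2 hc14) g).zpow_left _)).mul_left
      ((((central_swap a2 b1 hc23) g).zpow_left _).mul_left
        (((central_swap a2 b2 hc24) g).zpow_left _))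
  -- p-th power of the block commutator is 1
  have w : ∀ (x y : G), gcomm x y ^ p = 1 → ∀ (e : ℤ), (gcomm y x ^ e) ^ p = 1 := by
    intro x y hxy e
    rw [zpow_pow_comm, gc_swap, inv_pow, hxy, inv_one, one_zpow]
  have hBAp : gcomm (b1 ^ l₁ * b2 ^ l₂) (a1 ^ k₁ * a2 ^ k₂) ^ p = 1 := by
    rw [hBA]
    rw [(((((central_swap a1 b1 hc13) _).zpow_left _).mul_left
        (((central_swap a1 b2 hc14) _).zpow_left _))).mul_pow]
    rw [(((central_swap a1 b1 hc13) _).zpow_left _).mul_pow]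
    rw [(((central_swap a2 b1 hc23) _).zpow_left _).mul_pow]
    rw [w a1 b1 hz13p, w a1 b2 hz14p, w a2 b1 hz23p, w a2 b2 hz24p]
    simp
  have hBAchoose : gcomm (b1 ^ l₁ * b2 ^ l₂) (a1 ^ k₁ * a2 ^ k₂) ^ p.choose 2 = 1 := by
    obtain ⟨m, hm⟩ := hpd
    rw [hm, pow_mul, hBAp, one_pow]
  -- the power of the a-block and b-block
  have hA : Commute a1 a2 := commute_of_gc_eq_one r5
  have hB : Commute b1 b2 := commute_of_gc_eq_one r6
  have hApow : (a1 ^ k₁ * a2 ^ k₂) ^ p =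
      gcomm a1 b1 ^ k₁ * (gcomm a1 b1 ^ ((lam₁ : ℤ) * k₂) * gcomm a1 b2 ^ ((lam₂ : ℤ) * k₂)) := by
    rw [(hA.zpow_zpow k₁ k₂).mul_pow, zpow_pow_comm a1, zpow_pow_comm a2, r1, r2',
      (((hc13 (gcomm a1 b2 ^ lam₂)).pow_left lam₁)).mul_zpow,
      ← zpow_natCast (gcomm a1 b1) lam₁, ← zpow_natCast (gcomm a1 b2) lam₂,
      ← zpow_mul, ← zpow_mul]
  have hBpow : (b1 ^ l₁ * b2 ^ l₂) ^ p =
      gcomm a2 b1 ^ l₁ * gcomm a2 b2 ^ l₁ * gcomm a2 b2 ^ l₂ := by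
    rw [(hB.zpow_zpow l₁ l₂).mul_pow, zpow_pow_comm b1, zpow_pow_comm b2, r3', r4,
      (hc23 (gcomm a2 b2)).mul_zpow, mul_assoc]
  calc (a1 ^ k₁ * a2 ^ k₂ * b1 ^ l₁ * b2 ^ l₂) ^ p
      = ((a1 ^ k₁ * a2 ^ k₂) * (b1 ^ l₁ * b2 ^ l₂)) ^ p := by rw [mul_assoc]
    _ = (a1 ^ k₁ * a2 ^ k₂) ^ p * (b1 ^ l₁ * b2 ^ l₂) ^ p *
        gcomm (b1 ^ l₁ * b2 ^ l₂) (a1 ^ k₁ * a2 ^ k₂) ^ p.choose 2 :=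
      mul_pow_of_central _ _ hBAc p
    _ = (gcomm a1 b1 ^ k₁ * (gcomm a1 b1 ^ ((lam₁ : ℤ) * k₂) * gcomm a1 b2 ^ ((lam₂ : ℤ) * k₂))) *
        (gcomm a2 b1 ^ l₁ * gcomm a2 b2 ^ l₁ * gcomm a2 b2 ^ l₂) * 1 := by
      rw [hApow, hBpow, hBAchoose]
    _ = gcomm a1 b1 ^ (k₁ + (lam₁ : ℤ) * k₂) * gcomm a1 b2 ^ ((lam₂ : ℤ) * k₂) *
        gcomm a2 b1 ^ l₁ * gcomm a2 b2 ^ (l₁ + l₂) := by group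

end KEY

section JK2
variable (p : ℕ) (lam : ℕ × ℕ)

lemma jk_r1 : (jka₁ p lam) ^ p = gcomm (jka₁ p lam) (jkb₁ p lam) := by
  have h := jk_rel_one p lam _ (Set.mem_union_right _ (Set.mem_insert _ _))
  rw [map_mul, map_inv, map_pow, jk_mk_gc] at h
  exact mul_inv_eq_one.1 h

lemma jk_r2 : (jka₂ p lam) ^ p =
    gcomm (jka₁ p lam) ((jkb₁ p lam) ^ lam.1 * (jkb₂ p lam) ^ lam.2) := by
  have h := jk_rel_one p lam _ (Set.mem_union_right _
    (Set.mem_insert_of_mem _ (Set.mem_insert _ _)))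
  rw [map_mul, map_inv, map_pow, jk_mk_gc, map_mul, map_pow, map_pow] at h
  exact mul_inv_eq_one.1 h

lemma jk_r3 : (jkb₁ p lam) ^ p = gcomm (jka₂ p lam) (jkb₁ p lam * jkb₂ p lam) := by
  have h := jk_rel_one p lam _ (Set.mem_union_right _
    (Set.mem_insert_of_mem _ (Set.mem_insert_of_mem _ (Set.mem_insert _ _))))
  rw [map_mul, map_inv, map_pow, jk_mk_gc, map_mul] at h
  exact mul_inv_eq_one.1 h

lemma jk_r4 : (jkb₂ p lam) ^ p = gcomm (jka₂ p lam) (jkb₂ p lam) := by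
  have h := jk_rel_one p lam _ (Set.mem_union_right _
    (Set.mem_insert_of_mem _ (Set.mem_insert_of_mem _
      (Set.mem_insert_of_mem _ (Set.mem_insert _ _)))))
  rw [map_mul, map_inv, map_pow, jk_mk_gc] at h
  exact mul_inv_eq_one.1 h

lemma jk_r5 : gcomm (jka₁ p lam) (jka₂ p lam) = 1 := by
  have h := jk_rel_one p lam _ (Set.mem_union_right _
    (Set.mem_insert_of_mem _ (Set.mem_insert_of_mem _
      (Set.mem_insert_of_mem _ (Set.mem_insert_of_mem _ (Set.mem_insert _ _))))))
  rw [jk_mk_gc] at h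
  exact h

lemma jk_r6 : gcomm (jkb₁ p lam) (jkb₂ p lam) = 1 := by
  have h := jk_rel_one p lam _ (Set.mem_union_right _
    (Set.mem_insert_of_mem _ (Set.mem_insert_of_mem _
      (Set.mem_insert_of_mem _ (Set.mem_insert_of_mem _
        (Set.mem_insert_of_mem _ (Set.mem_singleton _)))))))
  rw [jk_mk_gc] at h
  exact h

end JK2

theorem stmt_3 (p : ℕ) (hp : p.Prime) (hodd : Odd p) (lam : ℕ × ℕ)
    (hlam : lam = (1, 0) ∨ (lam.1 ≤ p - 1 ∧ lam.2 = 1))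
    (k₁ k₂ l₁ l₂ : ℤ) :
    (jka₁ p lam ^ k₁ * jka₂ p lam ^ k₂ * jkb₁ p lam ^ l₁ * jkb₂ p lam ^ l₂) ^ p =
      gcomm (jka₁ p lam) (jkb₁ p lam) ^ (k₁ + (lam.1 : ℤ) * k₂) *
      gcomm (jka₁ p lam) (jkb₂ p lam) ^ ((lam.2 : ℤ) * k₂) *
      gcomm (jka₂ p lam) (jkb₁ p lam) ^ l₁ *
      gcomm (jka₂ p lam) (jkb₂ p lam) ^ (l₁ + l₂) := by
  have hpd : p ∣ p.choose 2 := by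
    have h2 : 2 < p := by
      rcases hodd with ⟨m, rfl⟩
      have := hp.two_le
      omega
    exact hp.dvd_choose_self (by norm_num) h2
  exact key_calc p hpd lam.1 lam.2 (jka₁ p lam) (jka₂ p lam) (jkb₁ p lam) (jkb₂ p lam)
    (jk_gc_central p lam 0 2) (jk_gc_central p lam 0 3)
    (jk_gc_central p lam 1 2) (jk_gc_central p lam 1 3)
    (jk_r1 p lam) (jk_r2 p lam) (jk_r3 p lam) (jk_r4 p lam)
    (jk_r5 p lam) (jk_r6 p lam) k₁ k₂ l₁ l₂
end
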